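/- arXiv:1209.5050 — 13 statements merged into one kernel-verified Lean document; each statement's English description precedes it below -/
import Mathlib

section
/- If T is (n,k)-quasi-*-paranormal and M is a closed T-invariant subspace of H, then the restriction T|_M is (n,k)-quasi-*-paranormal as an operator on M. -/
open ContinuousLinearMap

lemma adjoint_restrict_norm_le {H : Type*} [NormedAddCommGroup H] [InnerProductSpace ℂ H]
    [CompleteSpace H] (T : H →L[ℂ] H) (M : Submodule ℂ H) [CompleteSpace M]
    (TM : M →L[ℂ] M) (hTM : ∀ x : M, (TM x : H) = T x) (y : M) :
    ‖adjoint TM y‖ ≤ ‖adjoint T (y : H)‖ := by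
  have key : (inner ℂ (adjoint TM y) (adjoint TM y) : ℂ) =
      inner ℂ (adjoint T (y : H)) ((adjoint TM y : M) : H) := by
    calc (inner ℂ (adjoint TM y) (adjoint TM y) : ℂ)
        = inner ℂ y (TM (adjoint TM y)) := adjoint_inner_left TM _ _
      _ = inner ℂ (y : H) ((TM (adjoint TM y) : M) : H) := Submodule.coe_inner M _ _
      _ = inner ℂ (y : H) (T ((adjoint TM y : M) : H)) := by rw [hTM]
      _ = inner ℂ (adjoint T (y : H)) ((adjoint TM y : M) : H) :=
          (adjoint_inner_left T _ _).symm
  have h2 : ‖adjoint TM y‖ ^ 2 ≤ ‖adjoint T (y : H)‖ * ‖adjoint TM y‖ := by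
    rw [@norm_sq_eq_re_inner ℂ, key]
    calc RCLike.re (inner ℂ (adjoint T (y : H)) ((adjoint TM y : M) : H) : ℂ)
        ≤ ‖(inner ℂ (adjoint T (y : H)) ((adjoint TM y : M) : H) : ℂ)‖ :=
          RCLike.re_le_norm _
      _ ≤ ‖adjoint T (y : H)‖ * ‖((adjoint TM y : M) : H)‖ := norm_inner_le_norm _ _
      _ = ‖adjoint T (y : H)‖ * ‖adjoint TM y‖ := by rw [Submodule.norm_coe]
  rcases eq_or_lt_of_le (norm_nonneg (adjoint TM y)) with h0 | h0
  · rw [← h0]; exact norm_nonneg _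
  · exact (mul_le_mul_iff_left₀ h0).mp (by rwa [sq] at h2)

lemma pow_restrict_coe {H : Type*} [NormedAddCommGroup H] [InnerProductSpace ℂ H]
    (T : H →L[ℂ] H) (M : Submodule ℂ H)
    (TM : M →L[ℂ] M) (hTM : ∀ x : M, (TM x : H) = T x) (m : ℕ) (x : M) :
    (((TM ^ m) x : M) : H) = (T ^ m) (x : H) := by
  induction m generalizing x with
  | zero => simp
  | succ j ih =>
    rw [pow_succ', pow_succ']
    simp only [mul_apply_eq_comp]
    rw [hTM, ih]

/-- The restriction of an `(n,k)`-quasi-*-paranormal operator to a closed invariant subspace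
is again `(n,k)`-quasi-*-paranormal. -/
theorem stmt_2 {H : Type*} [NormedAddCommGroup H] [InnerProductSpace ℂ H] [CompleteSpace H]
    (T : H →L[ℂ] H) (n k : ℕ)
    (hT : ∀ x : H, ‖adjoint T (T ^ k <| x)‖ ^ (n + 1) ≤
      ‖T ^ (n + 1) <| T ^ k <| x‖ * ‖T ^ k <| x‖ ^ n)
    (M : Submodule ℂ H) [CompleteSpace M] (hMinv : ∀ x ∈ M, T x ∈ M)
    (TM : M →L[ℂ] M) (hTM : ∀ x : M, (TM x : H) = T x) :
    ∀ x : M, ‖adjoint TM (TM ^ k <| x)‖ ^ (n + 1) ≤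
      ‖TM ^ (n + 1) <| TM ^ k <| x‖ * ‖TM ^ k <| x‖ ^ n := by
  intro x
  have hcoek : (((TM ^ k) x : M) : H) = (T ^ k) (x : H) :=
    pow_restrict_coe T M TM hTM k x
  have h1 : ‖adjoint TM ((TM ^ k) x)‖ ≤ ‖adjoint T ((T ^ k) (x : H))‖ := by
    rw [← hcoek]; exact adjoint_restrict_norm_le T M TM hTM _
  calc ‖adjoint TM ((TM ^ k) x)‖ ^ (n + 1)
      ≤ ‖adjoint T ((T ^ k) (x : H))‖ ^ (n + 1) :=
        pow_le_pow_left₀ (norm_nonneg _) h1 _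
    _ ≤ ‖(T ^ (n + 1)) ((T ^ k) (x : H))‖ * ‖(T ^ k) (x : H)‖ ^ n := hT x
    _ = ‖(TM ^ (n + 1)) ((TM ^ k) x)‖ * ‖(TM ^ k) x‖ ^ n := by
        rw [← hcoek, ← pow_restrict_coe T M TM hTM (n+1) ((TM ^ k) x),
          Submodule.norm_coe, Submodule.norm_coe]
end

section
/- A bounded operator T on a complex Hilbert space is (n,k)-quasi-*-paranormal if and only if for all μ > 0, the operator T^{*k}T^{*(1+n)}T^{1+n}T^k − (1+n)μ^n T^{*k}TT^*T^k + nμ^{1+n} T^{*k}T^k is positive (self-adjoint and nonnegative). -/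
open ContinuousLinearMap

set_option synthInstance.maxHeartbeats 1000000

section ScalarLemmas

lemma qsp_rpow_form_iff (n : ℕ) {a b c : ℝ} (ha : 0 ≤ a) (hb : 0 ≤ b) (hc : 0 ≤ c) :
    b ≤ a ^ ((1 : ℝ) / (n + 1)) * c ^ ((n : ℝ) / (n + 1)) ↔ b ^ (n + 1) ≤ a * c ^ n := by
  have hn1 : ((n : ℝ) + 1) ≠ 0 := by positivity
  have key : a ^ ((1 : ℝ) / (n + 1)) * c ^ ((n : ℝ) / (n + 1))
      = (a * c ^ n) ^ ((1 : ℝ) / (n + 1)) := by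
    rw [Real.mul_rpow ha (by positivity), ← Real.rpow_natCast c n, ← Real.rpow_mul hc]
    congr 1
    field_simp
  rw [key]
  constructor
  · intro h
    calc b ^ (n + 1) ≤ ((a * c ^ n) ^ ((1 : ℝ) / (n + 1))) ^ (n + 1) :=
          pow_le_pow_left₀ hb h _
      _ = a * c ^ n := by
          rw [← Real.rpow_natCast ((a * c ^ n) ^ ((1 : ℝ) / (n + 1))) (n + 1),
            ← Real.rpow_mul (by positivity)]
          push_cast
          rw [div_mul_cancel₀ 1 hn1, Real.rpow_one]
  · intro h
    calc b = (b ^ (n + 1)) ^ ((1 : ℝ) / (n + 1)) := by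
          rw [← Real.rpow_natCast b (n + 1), ← Real.rpow_mul hb]
          push_cast
          rw [mul_div_cancel₀ 1 hn1]
          exact (Real.rpow_one b).symm
      _ ≤ (a * c ^ n) ^ ((1 : ℝ) / (n + 1)) :=
          Real.rpow_le_rpow (by positivity) h (by positivity)

lemma qsp_scalar_amgm (n : ℕ) {a b c μ : ℝ} (ha : 0 ≤ a) (hb : 0 ≤ b) (hc : 0 ≤ c) (hμ : 0 < μ)
    (h : b ^ (n + 1) ≤ a * c ^ n) :
    ((n : ℝ) + 1) * μ ^ n * b ^ 2 ≤ a ^ 2 + n * μ ^ (n + 1) * c ^ 2 := by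
  have hn1 : (0:ℝ) < (n : ℝ) + 1 := by positivity
  have hA0 : (0:ℝ) ≤ a ^ 2 := by positivity
  have hB0 : (0:ℝ) ≤ b ^ 2 := by positivity
  have hC0 : (0:ℝ) ≤ c ^ 2 := by positivity
  have hBC : (b ^ 2) ^ (n + 1) ≤ a ^ 2 * (c ^ 2) ^ n := by
    have h2 := mul_le_mul h h (by positivity) (by positivity)
    calc (b ^ 2) ^ (n + 1) = b ^ (n + 1) * b ^ (n + 1) := by ring
      _ ≤ (a * c ^ n) * (a * c ^ n) := h2
      _ = a ^ 2 * (c ^ 2) ^ n := by ring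
  have hkey : b ^ 2 ≤ (a ^ 2) ^ ((1 : ℝ) / (n + 1)) * (c ^ 2) ^ ((n : ℝ) / (n + 1)) :=
    (qsp_rpow_form_iff n hA0 hB0 hC0).mpr hBC
  have hamgm := Real.geom_mean_le_arith_mean2_weighted
    (by positivity : (0:ℝ) ≤ 1 / ((n:ℝ) + 1)) (by positivity : (0:ℝ) ≤ (n:ℝ) / ((n:ℝ) + 1))
    hA0 (by positivity : (0:ℝ) ≤ μ ^ (n + 1) * c ^ 2) (by field_simp; ring)
  have hsplit : (μ ^ (n + 1) * c ^ 2) ^ ((n : ℝ) / (n + 1)) =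
      μ ^ n * (c ^ 2) ^ ((n : ℝ) / (n + 1)) := by
    rw [Real.mul_rpow (by positivity) hC0]
    congr 1
    rw [← Real.rpow_natCast μ (n + 1), ← Real.rpow_mul hμ.le, ← Real.rpow_natCast μ n]
    congr 1
    push_cast
    field_simp
  rw [hsplit] at hamgm
  have hfinal : μ ^ n * b ^ 2 ≤
      1 / ((n:ℝ) + 1) * a ^ 2 + (n:ℝ) / ((n:ℝ) + 1) * (μ ^ (n + 1) * c ^ 2) := by
    calc μ ^ n * b ^ 2
        ≤ μ ^ n * ((a ^ 2) ^ ((1 : ℝ) / (n + 1)) * (c ^ 2) ^ ((n : ℝ) / (n + 1))) :=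
          mul_le_mul_of_nonneg_left hkey (by positivity)
      _ = (a ^ 2) ^ ((1 : ℝ) / (n + 1)) * (μ ^ n * (c ^ 2) ^ ((n : ℝ) / (n + 1))) := by ring
      _ ≤ _ := hamgm
  have hmul := mul_le_mul_of_nonneg_left hfinal hn1.le
  calc ((n : ℝ) + 1) * μ ^ n * b ^ 2 = ((n:ℝ)+1) * (μ ^ n * b ^ 2) := by ring
    _ ≤ ((n:ℝ)+1) * (1 / ((n:ℝ) + 1) * a ^ 2 + (n:ℝ) / ((n:ℝ) + 1) * (μ ^ (n + 1) * c ^ 2)) :=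
        hmul
    _ = a ^ 2 + n * μ ^ (n + 1) * c ^ 2 := by field_simp

lemma qsp_scalar_rev_pos (n : ℕ) {a b c : ℝ} (hb : 0 ≤ b) (ha : 0 < a) (hc : 0 < c)
    (h : ∀ μ : ℝ, 0 < μ →
      ((n : ℝ) + 1) * μ ^ n * b ^ 2 ≤ a ^ 2 + n * μ ^ (n + 1) * c ^ 2) :
    b ^ (n + 1) ≤ a * c ^ n := by
  have hn1 : ((n : ℝ) + 1) ≠ 0 := by positivity
  set μ := (a ^ 2 / c ^ 2) ^ ((1 : ℝ) / (n + 1)) with hμdef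
  have hμ : 0 < μ := Real.rpow_pos_of_pos (by positivity) _
  have hμpow : μ ^ (n + 1) = a ^ 2 / c ^ 2 := by
    rw [hμdef, ← Real.rpow_natCast ((a ^ 2 / c ^ 2) ^ ((1 : ℝ) / (n + 1))) (n + 1),
      ← Real.rpow_mul (by positivity)]
    push_cast
    rw [div_mul_cancel₀ 1 hn1, Real.rpow_one]
  have hstep : ((n : ℝ) + 1) * (μ ^ n * b ^ 2) ≤ ((n : ℝ) + 1) * a ^ 2 := by
    have h2 := h μ hμ
    have h4 : (n : ℝ) * μ ^ (n + 1) * c ^ 2 = n * a ^ 2 := by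
      rw [hμpow]; field_simp
    nlinarith [h2]
  have h1 : μ ^ n * b ^ 2 ≤ a ^ 2 :=
    le_of_mul_le_mul_left hstep (by positivity)
  have h3 : (μ ^ n * b ^ 2) ^ (n + 1) ≤ (a ^ 2) ^ (n + 1) :=
    pow_le_pow_left₀ (by positivity) h1 _
  have hμn : (μ ^ n) ^ (n + 1) = a ^ (2 * n) / c ^ (2 * n) := by
    rw [← pow_mul, mul_comm n (n + 1), pow_mul, hμpow, div_pow, ← pow_mul, ← pow_mul]
  have hfin : (b ^ (n + 1)) ^ 2 ≤ (a * c ^ n) ^ 2 := by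
    rw [mul_pow, hμn, div_mul_eq_mul_div, div_le_iff₀ (by positivity)] at h3
    have hcancel : (a ^ 2) ^ (n + 1) * c ^ (2 * n) =
        ((a * c ^ n) ^ 2) * a ^ (2 * n) := by ring
    rw [hcancel] at h3
    have h6 : a ^ (2 * n) * (b ^ 2) ^ (n + 1) = ((b ^ (n + 1)) ^ 2) * a ^ (2 * n) := by ring
    rw [h6] at h3
    exact le_of_mul_le_mul_right h3 (by positivity)
  exact (pow_le_pow_iff_left₀ (by positivity) (by positivity) two_ne_zero).mp hfin

lemma qsp_scalar_rev (n : ℕ) {a b c : ℝ} (ha : 0 ≤ a) (hb : 0 ≤ b) (hc : 0 ≤ c)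
    (h : ∀ μ : ℝ, 0 < μ →
      ((n : ℝ) + 1) * μ ^ n * b ^ 2 ≤ a ^ 2 + n * μ ^ (n + 1) * c ^ 2) :
    b ^ (n + 1) ≤ a * c ^ n := by
  have hev : ∀ ε : ℝ, 0 < ε → b ^ (n + 1) ≤ (a + ε) * (c + ε) ^ n := by
    intro ε hε
    refine qsp_scalar_rev_pos n hb (by positivity) (by positivity) fun μ hμ => ?_
    have h2 := h μ hμ
    have haa : a ^ 2 ≤ (a + ε) ^ 2 := by nlinarith
    have hcc : (n : ℝ) * μ ^ (n + 1) * c ^ 2 ≤ n * μ ^ (n + 1) * (c + ε) ^ 2 := by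
      have hc2 : c ^ 2 ≤ (c + ε) ^ 2 := by nlinarith
      have hμp : (0:ℝ) ≤ (n : ℝ) * μ ^ (n + 1) := by positivity
      nlinarith [mul_le_mul_of_nonneg_left hc2 hμp]
    linarith
  have tend : Filter.Tendsto (fun ε : ℝ => (a + ε) * (c + ε) ^ n)
      (nhdsWithin 0 (Set.Ioi 0)) (nhds (a * c ^ n)) := by
    have hco : Continuous fun ε : ℝ => (a + ε) * (c + ε) ^ n := by continuity
    have h0 := hco.tendsto 0
    simp only [add_zero] at h0
    exact h0.mono_left nhdsWithin_le_nhds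
  exact ge_of_tendsto tend
    (by filter_upwards [self_mem_nhdsWithin] with ε hε using hev ε hε)

end ScalarLemmas

section OperatorLemmas

variable {H : Type*} [NormedAddCommGroup H] [InnerProductSpace ℂ H] [CompleteSpace H]

lemma qsp_adj_pow (T : H →L[ℂ] H) (k : ℕ) : (adjoint T) ^ k = adjoint (T ^ k) := by
  rw [← star_eq_adjoint, ← star_eq_adjoint, ← star_pow]

lemma qsp_inner_calc (T : H →L[ℂ] H) (n k : ℕ) (μ : ℝ) (x : H) :
    @inner ℂ _ _ (((adjoint T) ^ k * (adjoint T) ^ (n + 1) * T ^ (n + 1) * T ^ k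
        - (((n : ℝ) + 1) * μ ^ n) • ((adjoint T) ^ k * T * adjoint T * T ^ k)
        + ((n : ℝ) * μ ^ (n + 1)) • ((adjoint T) ^ k * T ^ k)) x) x =
      ((‖T ^ (n + 1) <| T ^ k <| x‖ ^ 2
        - ((n : ℝ) + 1) * μ ^ n * ‖adjoint T (T ^ k <| x)‖ ^ 2
        + (n : ℝ) * μ ^ (n + 1) * ‖T ^ k <| x‖ ^ 2 : ℝ) : ℂ) := by
  have t1 : @inner ℂ _ _ (((adjoint T) ^ k * (adjoint T) ^ (n + 1) * T ^ (n + 1) * T ^ k) x) x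
      = ((‖T ^ (n + 1) <| T ^ k <| x‖ ^ 2 : ℝ) : ℂ) := by
    simp only [mul_apply_eq_comp, qsp_adj_pow, adjoint_inner_left, inner_self_eq_norm_sq_to_K]
    norm_cast
  have t2 : @inner ℂ _ _ (((adjoint T) ^ k * T * adjoint T * T ^ k) x) x
      = ((‖adjoint T (T ^ k <| x)‖ ^ 2 : ℝ) : ℂ) := by
    simp only [mul_apply_eq_comp, qsp_adj_pow, adjoint_inner_left]
    rw [← adjoint_inner_right T, inner_self_eq_norm_sq_to_K]
    norm_cast
  have t3 : @inner ℂ _ _ (((adjoint T) ^ k * T ^ k) x) x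
      = ((‖T ^ k <| x‖ ^ 2 : ℝ) : ℂ) := by
    simp only [mul_apply_eq_comp, qsp_adj_pow, adjoint_inner_left, inner_self_eq_norm_sq_to_K]
    norm_cast
  rw [add_apply, sub_apply, smul_apply, smul_apply, inner_add_left, inner_sub_left,
    ← Complex.coe_smul, ← Complex.coe_smul,
    inner_smul_left, inner_smul_left, t1, t2, t3]
  simp only [Complex.conj_ofReal]
  push_cast
  ring

end OperatorLemmas

/-- `T` is `(n,k)`-quasi-*-paranormal iff for all `μ > 0` the operator
`T^{*k} T^{*(1+n)} T^{1+n} T^k − (1+n) μ^n T^{*k} T T^* T^k + n μ^{1+n} T^{*k} T^k`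
is positive (here `≥ 0` in the Loewner order on selfadjoint operators). -/
theorem stmt_4 {H : Type*} [NormedAddCommGroup H] [InnerProductSpace ℂ H] [CompleteSpace H]
    (T : H →L[ℂ] H) (n k : ℕ) :
    (∀ x : H, ‖adjoint T (T ^ k <| x)‖ ≤
        ‖T ^ (n + 1) <| T ^ k <| x‖ ^ ((1 : ℝ) / (n + 1)) * ‖T ^ k <| x‖ ^ ((n : ℝ) / (n + 1)))
      ↔ ∀ μ : ℝ, 0 < μ →
        (0 : H →L[ℂ] H) ≤
          (adjoint T) ^ k * (adjoint T) ^ (n + 1) * T ^ (n + 1) * T ^ k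
            - (((n : ℝ) + 1) * μ ^ n) • ((adjoint T) ^ k * T * adjoint T * T ^ k)
            + ((n : ℝ) * μ ^ (n + 1)) • ((adjoint T) ^ k * T ^ k) := by
  have key : ∀ μ : ℝ,
      ((0 : H →L[ℂ] H) ≤
          (adjoint T) ^ k * (adjoint T) ^ (n + 1) * T ^ (n + 1) * T ^ k
            - (((n : ℝ) + 1) * μ ^ n) • ((adjoint T) ^ k * T * adjoint T * T ^ k)
            + ((n : ℝ) * μ ^ (n + 1)) • ((adjoint T) ^ k * T ^ k))
        ↔ ∀ x : H,
          ((n : ℝ) + 1) * μ ^ n * ‖adjoint T (T ^ k <| x)‖ ^ 2 ≤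
            ‖T ^ (n + 1) <| T ^ k <| x‖ ^ 2 + n * μ ^ (n + 1) * ‖T ^ k <| x‖ ^ 2 := by
    intro μ
    rw [nonneg_iff_isPositive, isPositive_iff_complex]
    constructor
    · intro hp x
      have h2 := (hp x).2
      rw [qsp_inner_calc T n k μ x] at h2
      simp only [RCLike.re_to_complex, Complex.ofReal_re] at h2
      linarith
    · intro hineq x
      rw [qsp_inner_calc T n k μ x]
      simp only [RCLike.re_to_complex, Complex.ofReal_re]
      exact ⟨trivial, by have := hineq x; linarith⟩
  constructor
  · intro hpar μ hμ
    rw [key μ]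
    intro x
    have hform := (qsp_rpow_form_iff n (norm_nonneg ((T ^ (n + 1)) ((T ^ k) x)))
      (norm_nonneg (adjoint T ((T ^ k) x))) (norm_nonneg ((T ^ k) x))).mp (hpar x)
    have := qsp_scalar_amgm n (norm_nonneg ((T ^ (n + 1)) ((T ^ k) x)))
      (norm_nonneg (adjoint T ((T ^ k) x))) (norm_nonneg ((T ^ k) x)) hμ hform
    linarith
  · intro hpos x
    refine (qsp_rpow_form_iff n (norm_nonneg ((T ^ (n + 1)) ((T ^ k) x)))
      (norm_nonneg (adjoint T ((T ^ k) x))) (norm_nonneg ((T ^ k) x))).mpr ?_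
    refine qsp_scalar_rev n (norm_nonneg ((T ^ (n + 1)) ((T ^ k) x)))
      (norm_nonneg (adjoint T ((T ^ k) x))) (norm_nonneg ((T ^ k) x)) fun μ hμ => ?_
    have := (key μ).mp (hpos μ hμ) x
    linarith
end

section
/- Let T be the unilateral weighted right shift on ℓ²(ℕ) with positive bounded weights (w_m), i.e., T e_m = w_m e_{m+1}. Then T is (n,k)-quasi-*-paranormal if and only if for every m ≥ k (with m ≥ 1), w_m^{n+1} ≤ w_{m+1} w_{m+2} ⋯ w_{m+n+1}. -/
open ContinuousLinearMap
open scoped ENNReal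

noncomputable section QSPsection

abbrev QSPH := lp (fun _ : ℕ => ℂ) 2

def QSPe (m : ℕ) : QSPH := lp.single 2 m (1 : ℂ)

lemma QSPcoord (f : QSPH) (i : ℕ) : @inner ℂ _ _ (QSPe i) f = f i := by
  rw [QSPe, lp.inner_single_left]
  simp [RCLike.inner_apply]

lemma QSPe_apply (m i : ℕ) : (QSPe m) i = if i = m then (1:ℂ) else 0 := by
  rw [QSPe, lp.single_apply]
  split <;> simp_all

lemma QSPnorm_e (m : ℕ) : ‖QSPe m‖ = 1 := by
  have := lp.norm_single (E := fun _ : ℕ => ℂ) (p := 2) (by norm_num) m (1:ℂ)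
  simpa [QSPe] using this

lemma QSPnorm_sq (f : QSPH) : ‖f‖ ^ 2 = ∑' i, ‖f i‖ ^ 2 := by
  have h := lp.norm_rpow_eq_tsum (E := fun _ : ℕ => ℂ) (p := 2) (by norm_num) f
  have h2 : ((2 : ℝ≥0∞)).toReal = ((2:ℕ):ℝ) := by norm_num
  rw [h2] at h
  simpa [Real.rpow_natCast] using h

lemma QSPsummable_sq (f : QSPH) : Summable (fun i => ‖f i‖ ^ 2) := by
  have h := (lp.memℓp f).summable (p := 2) (by norm_num)
  have h2 : ((2 : ℝ≥0∞)).toReal = ((2:ℕ):ℝ) := by norm_num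
  rw [h2] at h
  simpa [Real.rpow_natCast] using h

section QSPw

variable (w : ℕ → ℝ) (T : QSPH →L[ℂ] QSPH)
  (hT : ∀ m : ℕ, T (lp.single 2 m (1 : ℂ)) = (w (m + 1) : ℂ) • lp.single 2 (m + 1) (1 : ℂ))
include hT

lemma QSPhasSumT (y : QSPH) :
    HasSum (fun j => (y j * (w (j+1) : ℂ)) • QSPe (j+1)) (T y) := by
  have h0 : HasSum (fun j : ℕ => lp.single 2 j (y j)) y :=
    lp.hasSum_single (by norm_num) y
  have h1 := h0.mapL T
  have h2 : ∀ j : ℕ, T (lp.single 2 j (y j)) = (y j * (w (j+1) : ℂ)) • QSPe (j+1) := by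
    intro j
    have : lp.single 2 j (y j) = y j • (lp.single 2 j (1:ℂ) : QSPH) := by
      rw [← lp.single_smul]; norm_num
    rw [this, map_smul, hT j, QSPe, smul_smul]
  simpa [h2] using h1

lemma QSPT_apply_succ (y : QSPH) (m : ℕ) : (T y) (m+1) = (w (m+1) : ℂ) * y m := by
  have h := ((QSPhasSumT w T hT y).mapL (innerSL ℂ (QSPe (m+1)))).tsum_eq
  rw [innerSL_apply_apply] at h
  rw [← QSPcoord (T y) (m+1), ← h]
  rw [tsum_eq_single m]
  · simp [inner_smul_right, QSPcoord, QSPe_apply, mul_comm, QSPnorm_e]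
  · intro j hj
    rw [innerSL_apply_apply, inner_smul_right, QSPcoord, QSPe_apply, if_neg (show m+1 ≠ j+1 by omega)]
    simp

lemma QSPT_apply_zero (y : QSPH) : (T y) 0 = 0 := by
  have h := ((QSPhasSumT w T hT y).mapL (innerSL ℂ (QSPe 0))).tsum_eq
  rw [innerSL_apply_apply] at h
  rw [← QSPcoord (T y) 0, ← h]
  convert tsum_zero with j
  simp [inner_smul_right, QSPcoord, QSPe_apply]

lemma QSPadj_apply (y : QSPH) (i : ℕ) :
    (adjoint T y) i = (w (i+1) : ℂ) * y (i+1) := by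
  rw [← QSPcoord (adjoint T y) i, adjoint_inner_right, QSPe, hT i, inner_smul_left]
  rw [← QSPe]
  simp [QSPcoord, Complex.conj_ofReal]

lemma QSPTpow_single (j s : ℕ) :
    (T ^ s) (QSPe j) = (∏ i ∈ Finset.Icc (j+1) (j+s), (w i : ℂ)) • QSPe (j+s) := by
  induction s with
  | zero => simp
  | succ s ih =>
    rw [pow_succ', mul_apply_eq_comp, ih, map_smul, QSPe, hT, ← QSPe,
      show j + (s+1) = (j+s) + 1 by omega,
      Finset.prod_Icc_succ_top (by omega : j+1 ≤ j+s+1), smul_smul]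

lemma QSPTpow_apply_lt (y : QSPH) : ∀ s m : ℕ, m < s → ((T ^ s) y) m = 0 := by
  intro s
  induction s with
  | zero => omega
  | succ s ih =>
    intro m hm
    rw [pow_succ', mul_apply_eq_comp]
    match m with
    | 0 => exact QSPT_apply_zero w T hT _
    | m+1 => rw [QSPT_apply_succ w T hT _ m, ih m (by omega), mul_zero]

lemma QSPTpow_apply_add (y : QSPH) (s m : ℕ) :
    ((T ^ s) y) (m + s) = (∏ i ∈ Finset.Icc (m+1) (m+s), (w i : ℂ)) * y m := by
  induction s with
  | zero => simp
  | succ s ih =>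
    rw [pow_succ', mul_apply_eq_comp, show m + (s+1) = (m+s) + 1 by omega,
      QSPT_apply_succ w T hT _ (m+s), ih,
      Finset.prod_Icc_succ_top (by omega : m+1 ≤ m+s+1)]
    ring

end QSPw

lemma QSPrpow_final (n : ℕ) {A B C : ℝ} (hA : 0 ≤ A) (hB : 0 ≤ B) (hC : 0 ≤ C)
    (h : A^2 ≤ (B^2) ^ (1/((n:ℝ)+1)) * (C^2) ^ ((n:ℝ)/((n:ℝ)+1))) :
    A^(n+1) ≤ B * C^n := by
  have hn : ((n:ℝ)+1) ≠ 0 := by positivity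
  have h2 := Real.rpow_le_rpow (sq_nonneg A) h (by positivity : (0:ℝ) ≤ ((n:ℝ)+1)/2)
  have e1 : ((A^2) : ℝ) ^ (((n:ℝ)+1)/2) = A ^ (n+1) := by
    rw [← Real.rpow_natCast A 2, ← Real.rpow_mul hA,
      show (2:ℕ) * (((n:ℝ)+1)/2) = ((n+1:ℕ):ℝ) by push_cast; ring,
      Real.rpow_natCast]
  have e2 : ((B^2) ^ (1/((n:ℝ)+1))) ^ (((n:ℝ)+1)/2) = B := by
    rw [← Real.rpow_mul (sq_nonneg B),
      show 1/((n:ℝ)+1) * (((n:ℝ)+1)/2) = 1/2 by field_simp,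
      ← Real.rpow_natCast B 2, ← Real.rpow_mul hB]
    norm_num
  have e3 : ((C^2) ^ ((n:ℝ)/((n:ℝ)+1))) ^ (((n:ℝ)+1)/2) = C ^ n := by
    rw [← Real.rpow_mul (sq_nonneg C),
      show (n:ℝ)/((n:ℝ)+1) * (((n:ℝ)+1)/2) = (n:ℝ)/2 by field_simp,
      ← Real.rpow_natCast C 2, ← Real.rpow_mul hC,
      show (2:ℕ) * ((n:ℝ)/2) = ((n:ℕ):ℝ) by push_cast; ring,
      Real.rpow_natCast]
  rw [e1] at h2
  rw [Real.mul_rpow (by positivity) (by positivity), e2, e3] at h2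
  exact h2

set_option maxHeartbeats 1000000 in
/-- For the unilateral weighted right shift `T e_m = w_m e_{m+1}` (basis indexed by `m ≥ 1`,
realized here as `e m = lp.single 2 m 1` with `T (e m) = w (m+1) • e (m+1)`, so that the `m`-th
basis vector of the paper is `e (m-1)` and carries weight `w m`), `T` is
`(n,k)`-quasi-*-paranormal iff `w_m^{n+1} ≤ w_{m+1} ⋯ w_{m+n+1}` for every `m ≥ max k 1`. -/
theorem stmt_6 (n k : ℕ) (w : ℕ → ℝ) (hw : ∀ m : ℕ, 1 ≤ m → 0 < w m)
    (T : lp (fun _ : ℕ => ℂ) 2 →L[ℂ] lp (fun _ : ℕ => ℂ) 2)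
    (hT : ∀ m : ℕ, T (lp.single 2 m (1 : ℂ)) = (w (m + 1) : ℂ) • lp.single 2 (m + 1) (1 : ℂ)) :
    (∀ x : lp (fun _ : ℕ => ℂ) 2, ‖adjoint T (T ^ k <| x)‖ ^ (n + 1) ≤
        ‖T ^ (n + 1) <| T ^ k <| x‖ * ‖T ^ k <| x‖ ^ n)
      ↔ ∀ m : ℕ, max k 1 ≤ m → w m ^ (n + 1) ≤ ∏ i ∈ Finset.Icc (m + 1) (m + n + 1), w i := by
  constructor
  · intro hineq m hm
    have hk : k ≤ m := le_trans (le_max_left _ _) hm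
    have h1 : 1 ≤ m := le_trans (le_max_right _ _) hm
    obtain ⟨j, rfl⟩ : ∃ j, j + k = m := ⟨m - k, by omega⟩
    set c : ℝ := ∏ i ∈ Finset.Icc (j+1) (j+k), w i with hc
    have hcpos : 0 < c := Finset.prod_pos (fun i hi => hw i (by simp [Finset.mem_Icc] at hi; omega))
    set P : ℝ := ∏ i ∈ Finset.Icc (j+k+1) (j+k+n+1), w i with hP
    have hPpos : 0 < P := Finset.prod_pos (fun i hi => hw i (by simp [Finset.mem_Icc] at hi; omega))
    have hy : (T ^ k) (QSPe j) = (c : ℂ) • QSPe (j+k) := by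
      rw [QSPTpow_single w T hT j k, hc]
      norm_cast
    have hnc : ‖(c:ℂ)‖ = c := by
      rw [Complex.norm_real, Real.norm_eq_abs, abs_of_pos hcpos]
    have hCnorm : ‖(T ^ k) (QSPe j)‖ = c := by
      rw [hy, norm_smul, QSPnorm_e, hnc, mul_one]
    have hBnorm : ‖(T ^ (n+1)) ((T ^ k) (QSPe j))‖ = c * P := by
      rw [hy, map_smul, QSPTpow_single w T hT (j+k) (n+1), norm_smul, norm_smul, QSPnorm_e,
        hnc, mul_one]
      congr 1
      rw [show j+k+(n+1) = j+k+n+1 by omega] at *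
      rw [hP, ← Complex.ofReal_prod, Complex.norm_real, Real.norm_eq_abs, abs_of_pos]
      exact Finset.prod_pos (fun i hi => hw i (by simp [Finset.mem_Icc] at hi; omega))
    obtain ⟨m', hm'⟩ : ∃ m', j + k = m' + 1 := ⟨j + k - 1, by omega⟩
    have hAsq : ‖adjoint T ((T ^ k) (QSPe j))‖^2 = (w (j+k) * c)^2 := by
      rw [QSPnorm_sq]
      rw [tsum_eq_single m']
      · rw [QSPadj_apply w T hT, hy, lp.coeFn_smul, Pi.smul_apply, QSPe_apply,
          if_pos hm'.symm, smul_eq_mul, mul_one, ← hm', norm_mul, hnc, Complex.norm_real,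
          Real.norm_eq_abs, abs_of_pos (hw _ (by omega)), mul_pow]
      · intro i hi
        rw [QSPadj_apply w T hT, hy, lp.coeFn_smul, Pi.smul_apply, QSPe_apply,
          if_neg (by omega), smul_zero, mul_zero, norm_zero]
        norm_num
    have hAnorm : ‖adjoint T ((T ^ k) (QSPe j))‖ = w (j+k) * c := by
      have h0 : (0:ℝ) ≤ w (j+k) * c := le_of_lt (mul_pos (hw _ (by omega)) hcpos)
      calc ‖adjoint T ((T ^ k) (QSPe j))‖
          = Real.sqrt (‖adjoint T ((T ^ k) (QSPe j))‖^2) := (Real.sqrt_sq (norm_nonneg _)).symm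
        _ = Real.sqrt ((w (j+k) * c)^2) := by rw [hAsq]
        _ = w (j+k) * c := Real.sqrt_sq h0
    have key := hineq (QSPe j)
    rw [hAnorm, hBnorm, hCnorm] at key
    have key2 : w (j+k) ^ (n+1) * c^(n+1) ≤ P * c^(n+1) := by
      calc w (j+k) ^ (n+1) * c^(n+1) = (w (j+k) * c)^(n+1) := by rw [mul_pow]
        _ ≤ c * P * c^n := key
        _ = P * c^(n+1) := by ring
    exact le_of_mul_le_mul_right key2 (pow_pos hcpos _)
  · intro hcond x
    obtain ⟨y, hy⟩ : ∃ y : QSPH, y = (T ^ k) x := ⟨_, rfl⟩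
    rw [← hy]
    obtain ⟨a, ha⟩ : ∃ a : ℕ → ℝ, a = fun i => ‖y i‖^2 := ⟨_, rfl⟩
    have ha' : ∀ i, a i = ‖y i‖^2 := fun i => by rw [ha]
    have hanonneg : ∀ i, 0 ≤ a i := fun i => by rw [ha']; exact sq_nonneg _
    obtain ⟨P, hP⟩ : ∃ P : ℕ → ℝ, P = fun m => ∏ i ∈ Finset.Icc (m+1) (m+n+1), w i := ⟨_, rfl⟩
    have hPpos : ∀ m, 0 < P m := by
      intro m
      rw [hP]
      exact Finset.prod_pos (fun i hi => hw i (by simp [Finset.mem_Icc] at hi; omega))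
    have hy0 : ∀ i, i < k → a i = 0 := by
      intro i hi
      rw [ha' i, hy]
      simp only [QSPTpow_apply_lt w T hT x k i hi, norm_zero]
      norm_num
    have hadjcoord : ∀ i, ‖(adjoint T y) i‖^2 = w (i+1)^2 * a (i+1) := by
      intro i
      rw [QSPadj_apply w T hT, norm_mul, Complex.norm_real, Real.norm_eq_abs,
        abs_of_pos (hw _ (by omega)), mul_pow, ha' (i+1)]
    have hA2 : ‖adjoint T y‖^2 = ∑' i, w (i+1)^2 * a (i+1) := by
      rw [QSPnorm_sq]; exact tsum_congr hadjcoord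
    have SA : Summable (fun i => w (i+1)^2 * a (i+1)) :=
      (QSPsummable_sq (adjoint T y)).congr hadjcoord
    have hC2 : ‖y‖^2 = ∑' i, a i := by
      rw [QSPnorm_sq]
      exact tsum_congr (fun i => (ha' i).symm)
    have Sa : Summable a := (QSPsummable_sq y).congr (fun i => (ha' i).symm)
    have hcoordB : ∀ m, ‖((T ^ (n+1)) y) (m + (n+1))‖^2 = (P m)^2 * a m := by
      intro m
      rw [QSPTpow_apply_add w T hT y (n+1) m, norm_mul, ← Complex.ofReal_prod,
        Complex.norm_real, Real.norm_eq_abs, mul_pow, ha' m, hP,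
        show m + (n+1) = m+n+1 from rfl]
      congr 2
      exact abs_of_pos (Finset.prod_pos (fun i hi => hw i (by simp [Finset.mem_Icc] at hi; omega)))
    have hsupp : Function.support (fun i => ‖((T ^ (n+1)) y) i‖^2) ⊆
        Set.range (fun m => m + (n+1)) := by
      intro i hi
      rcases le_or_gt (n+1) i with h | h
      · exact ⟨i - (n+1), by simp; omega⟩
      · exfalso; apply hi
        simp only [QSPTpow_apply_lt w T hT y (n+1) i h, norm_zero]
        norm_num
    have hB2 : ‖(T ^ (n+1)) y‖^2 = ∑' m, (P m)^2 * a m := by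
      rw [QSPnorm_sq, ← Function.Injective.tsum_eq (add_left_injective (n+1)) hsupp]
      exact tsum_congr hcoordB
    have SB : Summable (fun m => (P m)^2 * a m) :=
      ((QSPsummable_sq ((T ^ (n+1)) y)).comp_injective (add_left_injective (n+1))).congr hcoordB
    have hshift1 : ∑' i, (P (i+1))^2 * a (i+1) ≤ ∑' m, (P m)^2 * a m :=
      Summable.tsum_le_tsum_of_inj (fun i => i + 1) (add_left_injective 1)
        (fun c _ => mul_nonneg (sq_nonneg _) (hanonneg c)) (fun i => le_rfl)
        (SB.comp_injective (add_left_injective 1)) SB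
    have hshift2 : ∑' i, a (i+1) ≤ ∑' m, a m :=
      Summable.tsum_le_tsum_of_inj (fun i => i + 1) (add_left_injective 1)
        (fun c _ => hanonneg c) (fun i => le_rfl)
        (Sa.comp_injective (add_left_injective 1)) Sa
    have hwk : ∀ i : ℕ, a (i+1) ≠ 0 → w (i+1) ^ (n+1) ≤ P (i+1) := by
      intro i h0
      have hik : k ≤ i+1 := by
        by_contra h
        exact h0 (hy0 _ (by omega))
      rw [hP]
      exact hcond (i+1) (by simp only [max_le_iff]; omega)
    rcases Nat.eq_zero_or_pos n with hn0 | hn1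
    · subst hn0
      have hA2le : ‖adjoint T y‖^2 ≤ ‖(T ^ (0+1)) y‖^2 := by
        rw [hA2, hB2]
        refine Summable.tsum_le_tsum_of_inj (fun i => i + 1) (add_left_injective 1)
          (fun c _ => mul_nonneg (sq_nonneg _) (hanonneg c)) (fun i => ?_)
          SA SB
        show w (i+1)^2 * a (i+1) ≤ (P (i+1))^2 * a (i+1)
        rcases eq_or_ne (a (i+1)) 0 with h0 | h0
        · rw [h0, mul_zero, mul_zero]
        · have h1 : w (i+1) ≤ P (i+1) := by simpa using hwk i h0
          have hwp := hw (i+1) (by omega)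
          exact mul_le_mul_of_nonneg_right (pow_le_pow_left₀ hwp.le h1 2) (hanonneg (i+1))
      have hfin : ‖adjoint T y‖ ≤ ‖(T ^ (0+1)) y‖ := by
        have h1 := Real.sqrt_le_sqrt hA2le
        rwa [Real.sqrt_sq (norm_nonneg _), Real.sqrt_sq (norm_nonneg _)] at h1
      simpa only [zero_add, pow_one, pow_zero, mul_one] using hfin
    · have hnR : (0:ℝ) < (n:ℝ) := by exact_mod_cast hn1
      have hterm : ∀ i, w (i+1)^2 * a (i+1) ≤
          ((P (i+1))^2 * a (i+1)) ^ (1/((n:ℝ)+1)) * (a (i+1)) ^ ((n:ℝ)/((n:ℝ)+1)) := by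
        intro i
        rcases eq_or_ne (a (i+1)) 0 with h0 | h0
        · rw [h0, mul_zero, mul_zero, Real.zero_rpow (by positivity), zero_mul]
        · have hapos : 0 < a (i+1) := lt_of_le_of_ne (hanonneg _) (Ne.symm h0)
          have hwp := hw (i+1) (by omega)
          have h1 : w (i+1) ^ (n+1) ≤ P (i+1) := hwk i h0
          have hw2 : w (i+1)^2 ≤ ((P (i+1))^2) ^ (1/((n:ℝ)+1)) := by
            have e1 : ((P (i+1))^2 : ℝ) ^ (1/((n:ℝ)+1)) = (P (i+1)) ^ ((2:ℝ)/((n:ℝ)+1)) := by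
              rw [← Real.rpow_natCast (P (i+1)) 2, ← Real.rpow_mul (hPpos _).le]
              congr 1
              push_cast
              ring
            have e0 : (w (i+1))^2 = ((w (i+1))^(n+1) : ℝ) ^ ((2:ℝ)/((n:ℝ)+1)) := by
              rw [← Real.rpow_natCast (w (i+1)) (n+1), ← Real.rpow_mul hwp.le,
                show ((n+1:ℕ):ℝ) * ((2:ℝ)/((n:ℝ)+1)) = ((2:ℕ):ℝ) by push_cast; field_simp,
                Real.rpow_natCast]
            rw [e0, e1]
            exact Real.rpow_le_rpow (pow_nonneg hwp.le _) h1 (by positivity)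
          calc w (i+1)^2 * a (i+1)
              ≤ ((P (i+1))^2) ^ (1/((n:ℝ)+1)) * a (i+1) :=
                mul_le_mul_of_nonneg_right hw2 (hanonneg _)
            _ = ((P (i+1))^2 * a (i+1)) ^ (1/((n:ℝ)+1)) * (a (i+1)) ^ ((n:ℝ)/((n:ℝ)+1)) := by
                rw [Real.mul_rpow (sq_nonneg _) (hanonneg _), mul_assoc]
                congr 1
                rw [← Real.rpow_add hapos,
                  show 1/((n:ℝ)+1) + (n:ℝ)/((n:ℝ)+1) = 1 by rw [← add_div, add_comm]; exact div_self (by positivity), Real.rpow_one]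
      have hpq : Real.HolderConjugate ((n:ℝ)+1) (((n:ℝ)+1)/(n:ℝ)) := by
        constructor
        · rw [inv_div, inv_one, inv_eq_one_div, ← add_div, add_comm]; exact div_self (by positivity)
        · linarith
        · positivity
      have he1 : ∀ i:ℕ, (((P (i+1))^2 * a (i+1)) ^ (1/((n:ℝ)+1))) ^ ((n:ℝ)+1)
          = (P (i+1))^2 * a (i+1) := by
        intro i
        rw [← Real.rpow_mul (mul_nonneg (sq_nonneg _) (hanonneg _)), one_div,
          inv_mul_cancel₀ (by positivity), Real.rpow_one]
      have he2 : ∀ i:ℕ, ((a (i+1)) ^ ((n:ℝ)/((n:ℝ)+1))) ^ (((n:ℝ)+1)/(n:ℝ)) = a (i+1) := by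
        intro i
        rw [← Real.rpow_mul (hanonneg _),
          show (n:ℝ)/((n:ℝ)+1) * (((n:ℝ)+1)/(n:ℝ)) = 1 by field_simp, Real.rpow_one]
      have hfsum : Summable (fun i => (((P (i+1))^2 * a (i+1)) ^ (1/((n:ℝ)+1))) ^ ((n:ℝ)+1)) :=
        (SB.comp_injective (add_left_injective 1)).congr (fun i => (he1 i).symm)
      have hgsum : Summable (fun i => ((a (i+1)) ^ ((n:ℝ)/((n:ℝ)+1))) ^ (((n:ℝ)+1)/(n:ℝ))) :=
        (Sa.comp_injective (add_left_injective 1)).congr (fun i => (he2 i).symm)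
      have holder := Real.inner_le_Lp_mul_Lq_tsum_of_nonneg hpq
        (f := fun i => ((P (i+1))^2 * a (i+1)) ^ (1/((n:ℝ)+1)))
        (g := fun i => (a (i+1)) ^ ((n:ℝ)/((n:ℝ)+1)))
        (fun i => Real.rpow_nonneg (mul_nonneg (sq_nonneg _) (hanonneg _)) _)
        (fun i => Real.rpow_nonneg (hanonneg _) _)
        hfsum hgsum
      have hSfg : Summable (fun i => (((P (i+1))^2 * a (i+1)) ^ (1/((n:ℝ)+1))) *
          ((a (i+1)) ^ ((n:ℝ)/((n:ℝ)+1)))) :=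
        Real.summable_mul_of_Lp_Lq_of_nonneg hpq
          (fun i => Real.rpow_nonneg (mul_nonneg (sq_nonneg _) (hanonneg _)) _)
          (fun i => Real.rpow_nonneg (hanonneg _) _)
          hfsum hgsum
      rw [tsum_congr he1, tsum_congr he2, one_div_div] at holder
      have main : ‖adjoint T y‖^2 ≤
          (‖(T ^ (n+1)) y‖^2) ^ (1/((n:ℝ)+1)) * (‖y‖^2) ^ ((n:ℝ)/((n:ℝ)+1)) := by
        rw [hA2, hB2, hC2]
        calc ∑' i, w (i+1)^2 * a (i+1)
            ≤ ∑' i, (((P (i+1))^2 * a (i+1)) ^ (1/((n:ℝ)+1))) *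
              ((a (i+1)) ^ ((n:ℝ)/((n:ℝ)+1))) := Summable.tsum_le_tsum hterm SA hSfg
          _ ≤ (∑' i, (P (i+1))^2 * a (i+1)) ^ (1/((n:ℝ)+1)) *
              (∑' i, a (i+1)) ^ ((n:ℝ)/((n:ℝ)+1)) := holder
          _ ≤ (∑' m, (P m)^2 * a m) ^ (1/((n:ℝ)+1)) * (∑' m, a m) ^ ((n:ℝ)/((n:ℝ)+1)) := by
              have t1 : (∑' i, (P (i+1))^2 * a (i+1)) ^ (1/((n:ℝ)+1)) ≤
                  (∑' m, (P m)^2 * a m) ^ (1/((n:ℝ)+1)) :=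
                Real.rpow_le_rpow
                  (tsum_nonneg (fun i => mul_nonneg (sq_nonneg _) (hanonneg _)))
                  hshift1 (by positivity)
              have t2 : (∑' i, a (i+1)) ^ ((n:ℝ)/((n:ℝ)+1)) ≤
                  (∑' m, a m) ^ ((n:ℝ)/((n:ℝ)+1)) :=
                Real.rpow_le_rpow (tsum_nonneg (fun i => hanonneg _)) hshift2 (by positivity)
              exact mul_le_mul t1 t2
                (Real.rpow_nonneg (tsum_nonneg (fun i => hanonneg _)) _)
                (Real.rpow_nonneg (tsum_nonneg (fun m => mul_nonneg (sq_nonneg _) (hanonneg _))) _)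
      exact QSPrpow_final n (norm_nonneg _) (norm_nonneg _) (norm_nonneg _) main
end QSPsection
end

section
/- Let T be the unilateral weighted right shift on ℓ²(ℕ) with weights satisfying w_1 > w_2 = w_3 = w_4 = ⋯ > 0 and k ≥ 2. Then T is (n,k)-quasi-*-paranormal but not normaloid: ‖T‖ = w_1 while the spectral radius r(T) = w_2 < w_1. -/
open ContinuousLinearMap
open scoped ENNReal ComplexConjugate

private lemma stmt7_sq_le {a b : ℝ} (_ : 0 ≤ a) (hb : 0 ≤ b) (h : a^2 ≤ b^2) : a ≤ b := by
  nlinarith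

private lemma stmt7_sq_eq {a b : ℝ} (ha : 0 ≤ a) (hb : 0 ≤ b) (h : a^2 = b^2) : a = b :=
  le_antisymm (stmt7_sq_le ha hb h.le) (stmt7_sq_le hb ha h.ge)

set_option maxHeartbeats 2000000

private lemma stmt7_norm_single (m : ℕ) : ‖lp.single (E := fun _ : ℕ => ℂ) 2 m (1:ℂ)‖ = 1 := by
  have := lp.norm_single (p := 2) (E := fun _ : ℕ => ℂ) (by norm_num) m (1:ℂ)
  simpa using this

/-- Let `T` be the unilateral weighted right shift with weights `w_1 > w_2 = w_3 = ⋯ > 0`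
and let `k ≥ 2`. Then `T` is `(n,k)`-quasi-*-paranormal, yet `T` is not normaloid:
`‖T‖ = w_1` while the spectral radius of `T` equals `w_2 < w_1`. -/
theorem stmt_7 (n k : ℕ) (hk : 2 ≤ k) (w : ℕ → ℝ)
    (hw2 : 0 < w 2) (hw12 : w 2 < w 1) (hwc : ∀ m : ℕ, 2 ≤ m → w m = w 2)
    (T : lp (fun _ : ℕ => ℂ) 2 →L[ℂ] lp (fun _ : ℕ => ℂ) 2)
    (hT : ∀ m : ℕ, T (lp.single 2 m (1 : ℂ)) = (w (m + 1) : ℂ) • lp.single 2 (m + 1) (1 : ℂ)) :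
    (∀ x : lp (fun _ : ℕ => ℂ) 2, ‖adjoint T (T ^ k <| x)‖ ^ (n + 1) ≤
        ‖T ^ (n + 1) <| T ^ k <| x‖ * ‖T ^ k <| x‖ ^ n)
      ∧ ‖T‖ = w 1 ∧ spectralRadius ℂ T = ENNReal.ofReal (w 2) := by
  have hw1 : 0 < w 1 := hw2.trans hw12
  have hwpos : ∀ i : ℕ, 0 < w (i + 1) := by
    intro i
    rcases Nat.lt_or_ge i 1 with h | h
    · interval_cases i; exact hw1
    · rw [hwc (i+1) (by omega)]; exact hw2
  have hwle : ∀ i : ℕ, w (i + 1) ≤ w 1 := by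
    intro i
    rcases Nat.lt_or_ge i 1 with h | h
    · interval_cases i; exact le_rfl
    · rw [hwc (i+1) (by omega)]; exact hw12.le
  -- inner with basis vectors is evaluation
  have hinner : ∀ (f : lp (fun _ : ℕ => ℂ) 2) (j : ℕ),
      @inner ℂ _ _ (lp.single 2 j (1:ℂ)) f = f j := by
    intro f j
    rw [lp.inner_single_left]
    simp [RCLike.inner_apply]
  -- HasSum representation of T x
  have key : ∀ x : lp (fun _ : ℕ => ℂ) 2,
      HasSum (fun m : ℕ => (x m * (w (m+1) : ℂ)) • lp.single 2 (m+1) (1:ℂ)) (T x) := by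
    intro x
    have h := (lp.hasSum_single (by norm_num) x).mapL T
    have hterm : ∀ m : ℕ,
        T (lp.single 2 m (x m)) = (x m * (w (m+1):ℂ)) • lp.single 2 (m+1) (1:ℂ) := by
      intro m
      rw [show lp.single (E := fun _ : ℕ => ℂ) 2 m (x m) = x m • lp.single 2 m (1:ℂ) by
            rw [← lp.single_smul]; simp,
          map_smul, hT, smul_smul]
    exact (funext hterm) ▸ h
  -- coordinates of T x
  have hcoord : ∀ x : lp (fun _ : ℕ => ℂ) 2,
      (T x) 0 = 0 ∧ ∀ i : ℕ, (T x) (i+1) = x i * (w (i+1) : ℂ) := by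
    intro x
    set c : ℕ → ℂ := fun m => x m * (w (m+1) : ℂ) with hc
    have hterm : ∀ j m : ℕ, innerSL ℂ (lp.single (E := fun _ : ℕ => ℂ) 2 j (1:ℂ))
        (c m • lp.single 2 (m+1) (1:ℂ)) = if j = m + 1 then c m else 0 := by
      intro j m
      simp only [innerSL_apply_apply, hinner, lp.coeFn_smul, Pi.smul_apply, lp.single_apply]
      split_ifs <;> simp_all [Pi.single_apply]
    constructor
    · have h := (key x).mapL (innerSL ℂ (lp.single 2 0 (1:ℂ)))
      have h2 := h.congr_fun (fun m => by rw [hterm 0 m, if_neg (by omega)])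
      rw [← hinner (T x) 0]
      exact h2.unique hasSum_zero
    · intro i
      have h := (key x).mapL (innerSL ℂ (lp.single 2 (i+1) (1:ℂ)))
      have h2 := h.congr_fun (fun m => (hterm (i+1) m).symm)
      have h3 : HasSum (fun m : ℕ => if i + 1 = m + 1 then c m else 0) (c i) := by
        have h4 := hasSum_single (f := fun m : ℕ => if i + 1 = m + 1 then c m else 0) i
          (fun b hb => by
            show (if i + 1 = b + 1 then c b else 0) = 0
            rw [if_neg (by omega)])
        simpa using h4
      rw [← hinner (T x) (i+1)]
      exact h2.unique h3
  -- norm-squared as a sum of coordinates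
  have hns : ∀ f : lp (fun _ : ℕ => ℂ) 2, HasSum (fun i => ‖f i‖ ^ 2) (‖f‖ ^ 2) := by
    intro f
    have h := lp.hasSum_norm (p := 2) (E := fun _ : ℕ => ℂ) (by norm_num) f
    rw [show ((2:ℝ≥0∞).toReal) = ((2:ℕ):ℝ) by norm_num] at h
    simpa [Real.rpow_natCast] using h
  -- norm-squared of T x
  have hTns : ∀ x : lp (fun _ : ℕ => ℂ) 2,
      HasSum (fun i : ℕ => (w (i+1))^2 * ‖x i‖ ^ 2) (‖T x‖ ^ 2) := by
    intro x
    have h := hns (T x)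
    have h2 := (hasSum_nat_add_iff' (f := fun i => ‖(T x) i‖ ^ 2) 1).mpr h
    rw [show ‖T x‖^2 - ∑ i ∈ Finset.range 1, ‖(T x) i‖^2 = ‖T x‖^2 by
      simp [(hcoord x).1]] at h2
    refine h2.congr_fun fun i => ?_
    have hc : ‖x i * ((w (i+1) : ℝ) : ℂ)‖ = w (i+1) * ‖x i‖ := by
      rw [norm_mul, Complex.norm_real, Real.norm_eq_abs, abs_of_pos (hwpos i), mul_comm]
    rw [(hcoord x).2 i, hc, mul_pow]
  -- operator bound
  have hTbound : ∀ x : lp (fun _ : ℕ => ℂ) 2, ‖T x‖ ≤ w 1 * ‖x‖ := by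
    intro x
    have h1 := hTns x
    have h2 := (hns x).mul_left ((w 1)^2)
    have hle := hasSum_le (fun i => by
      have := sq_nonneg ‖x i‖
      have h3 : (w (i+1))^2 ≤ (w 1)^2 := by nlinarith [hwpos i, hwle i, hw1]
      nlinarith) h1 h2
    refine stmt7_sq_le (norm_nonneg _) (by positivity) ?_
    calc ‖T x‖ ^ 2 ≤ (w 1)^2 * ‖x‖^2 := hle
      _ = (w 1 * ‖x‖)^2 := by ring
  -- shift property of norms for vectors vanishing at 0
  have hshift : ∀ y : lp (fun _ : ℕ => ℂ) 2, y 0 = 0 →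
      ‖T y‖ = w 2 * ‖y‖ ∧ (T y) 0 = 0 ∧ (T y) 1 = 0 := by
    intro y hy0
    refine ⟨?_, (hcoord y).1, by have := (hcoord y).2 0; rw [hy0, zero_mul] at this; exact this⟩
    have h1 := hTns y
    have h2 : HasSum (fun i : ℕ => (w 2)^2 * ‖y i‖ ^ 2) (‖T y‖ ^ 2) := by
      refine h1.congr_fun fun i => ?_
      rcases Nat.eq_zero_or_pos i with h | h
      · subst h; rw [hy0]; simp
      · rw [hwc (i+1) (by omega)]
    have h3 := (hns y).mul_left ((w 2)^2)
    have := h3.unique h2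
    exact (stmt7_sq_eq (by positivity) (norm_nonneg _) (by linear_combination this)).symm
  -- iterated: for y with y 0 = 0, ‖T^j y‖ = w2^j ‖y‖ and coordinate 0 stays 0
  have hiter : ∀ (j : ℕ) (y : lp (fun _ : ℕ => ℂ) 2), y 0 = 0 →
      ‖(T ^ j) y‖ = (w 2)^j * ‖y‖ ∧ ((T ^ j) y) 0 = 0 := by
    intro j
    induction j with
    | zero => intro y hy; simpa using hy
    | succ m ih =>
      intro y hy
      have hstep : (T ^ (m+1)) y = T ((T ^ m) y) := by
        rw [pow_succ']; rfl
      obtain ⟨hn, h0⟩ := ih y hy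
      obtain ⟨hn2, h02, _⟩ := hshift ((T ^ m) y) h0
      rw [hstep, hn2, hn]
      exact ⟨by ring, h02⟩
  -- norm of ‖T‖
  have hTnorm : ‖T‖ = w 1 := by
    apply le_antisymm
    · exact T.opNorm_le_bound hw1.le hTbound
    · have h1 : T (lp.single 2 0 (1:ℂ)) = (w 1 : ℂ) • lp.single 2 1 (1:ℂ) := hT 0
      have h2 : ‖T (lp.single 2 0 (1:ℂ))‖ = w 1 := by
        rw [h1, norm_smul]
        rw [stmt7_norm_single 1, mul_one, Complex.norm_real, Real.norm_eq_abs, abs_of_pos hw1]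
      calc w 1 = ‖T (lp.single 2 0 (1:ℂ))‖ := h2.symm
        _ ≤ ‖T‖ * ‖lp.single (E := fun _ : ℕ => ℂ) 2 0 (1:ℂ)‖ := T.le_opNorm _
        _ = ‖T‖ := by rw [stmt7_norm_single 0, mul_one]
  -- norms of powers
  have hpow_norm : ∀ m : ℕ, 1 ≤ m → ‖T ^ m‖ = w 1 * (w 2)^(m-1) := by
    intro m hm
    obtain ⟨j, rfl⟩ : ∃ j, m = j + 1 := ⟨m - 1, by omega⟩
    rw [Nat.add_sub_cancel]
    apply le_antisymm
    · refine opNorm_le_bound _ (show (0:ℝ) ≤ w 1 * (w 2)^j by positivity) fun x => ?_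
      have hstep : (T ^ (j+1)) x = (T ^ j) (T x) := by
        rw [pow_succ, mul_apply_eq_comp]
      rw [hstep, (hiter j (T x) (hcoord x).1).1]
      have hp : (0:ℝ) ≤ (w 2)^j := by positivity
      calc (w 2)^j * ‖T x‖ ≤ (w 2)^j * (w 1 * ‖x‖) := by
            nlinarith [hTbound x, norm_nonneg (T x)]
        _ = w 1 * (w 2)^j * ‖x‖ := by ring
    · -- lower bound via e 0
      have hsingle : ∀ m : ℕ, 1 ≤ m →
          (T ^ m) (lp.single 2 0 (1:ℂ)) = ((w 1 * (w 2)^(m-1) : ℝ) : ℂ) • lp.single 2 m (1:ℂ) := by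
        intro m hm
        induction m with
        | zero => omega
        | succ j ih =>
          rcases Nat.eq_zero_or_pos j with h | h
          · subst h
            simpa using hT 0
          · obtain ⟨i, rfl⟩ : ∃ i, j = i + 1 := ⟨j - 1, by omega⟩
            rw [pow_succ', mul_apply_eq_comp, ih (by omega), map_smul, hT (i+1), smul_smul]
            simp only [Nat.add_sub_cancel]
            congr 1
            rw [hwc (i+1+1) (by omega)]
            push_cast
            rw [pow_succ]
            ring
      have h2 : ‖(T ^ (j+1)) (lp.single 2 0 (1:ℂ))‖ = w 1 * (w 2)^j := by
        rw [hsingle (j+1) (by omega), Nat.add_sub_cancel, norm_smul]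
        rw [stmt7_norm_single (j+1), mul_one, Complex.norm_real, Real.norm_eq_abs,
          abs_of_pos (by positivity)]
      calc w 1 * (w 2)^j = ‖(T ^ (j+1)) (lp.single 2 0 (1:ℂ))‖ := h2.symm
        _ ≤ ‖T ^ (j+1)‖ * ‖lp.single (E := fun _ : ℕ => ℂ) 2 0 (1:ℂ)‖ := (T ^ (j+1)).le_opNorm _
        _ = ‖T ^ (j+1)‖ := by rw [stmt7_norm_single 0, mul_one]
  -- coordinates of the adjoint
  have hadj : ∀ (y : lp (fun _ : ℕ => ℂ) 2) (i : ℕ),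
      (adjoint T y) i = (w (i+1) : ℂ) * y (i+1) := by
    intro y i
    rw [← hinner (adjoint T y) i, adjoint_inner_right, hT i, inner_smul_left, hinner]
    simp [Complex.conj_ofReal]
  -- norm of adjoint T y for y vanishing at 0 and 1
  have hadj_norm : ∀ y : lp (fun _ : ℕ => ℂ) 2, y 0 = 0 → y 1 = 0 →
      ‖adjoint T y‖ = w 2 * ‖y‖ := by
    intro y hy0 hy1
    have h1 := hns (adjoint T y)
    have h2 : HasSum (fun i : ℕ => (w 2)^2 * ‖y (i+1)‖ ^ 2) (‖adjoint T y‖ ^ 2) := by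
      refine h1.congr_fun fun i => ?_
      rw [hadj y i]
      rcases Nat.eq_zero_or_pos i with h | h
      · subst h; rw [hy1]; simp
      · rw [norm_mul, Complex.norm_real, Real.norm_eq_abs, abs_of_pos (hwpos i),
          hwc (i+1) (by omega), mul_pow]
    have h3 : HasSum (fun i : ℕ => (w 2)^2 * ‖y (i+1)‖ ^ 2) ((w 2)^2 * ‖y‖ ^ 2) := by
      have h4 := ((hns y).mul_left ((w 2)^2))
      have h5 := (hasSum_nat_add_iff' (f := fun i => (w 2)^2 * ‖y i‖ ^ 2) 1).mpr h4
      rw [show (w 2)^2 * ‖y‖^2 - ∑ i ∈ Finset.range 1, (w 2)^2 * ‖y i‖^2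
          = (w 2)^2 * ‖y‖^2 by simp [hy0]] at h5
      exact h5
    have := h2.unique h3
    exact stmt7_sq_eq (norm_nonneg _) (by positivity) (by linear_combination this)
  -- support of T^k x
  have hsupp : ∀ x : lp (fun _ : ℕ => ℂ) 2, ((T ^ k) x) 0 = 0 ∧ ((T ^ k) x) 1 = 0 := by
    intro x
    obtain ⟨j, rfl⟩ : ∃ j, k = j + 2 := ⟨k - 2, by omega⟩
    have hstep : (T ^ (j+2)) x = T (T ((T ^ j) x)) := by
      rw [show j + 2 = (j+1) + 1 by ring, pow_succ', mul_apply_eq_comp, pow_succ', mul_apply_eq_comp]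
    set z := (T ^ j) x
    have h1 := (hcoord z).1
    obtain ⟨_, h2, h3⟩ := hshift (T z) h1
    rw [hstep]
    exact ⟨h2, h3⟩
  refine ⟨?_, hTnorm, ?_⟩
  · -- quasi-*-paranormality
    intro x
    set y := (T ^ k) x with hy
    obtain ⟨hy0, hy1⟩ := hsupp x
    have h1 : ‖adjoint T y‖ = w 2 * ‖y‖ := hadj_norm y hy0 hy1
    have h2 : ‖(T ^ (n+1)) y‖ = (w 2)^(n+1) * ‖y‖ := (hiter (n+1) y hy0).1
    show ‖adjoint T y‖ ^ (n+1) ≤ ‖(T ^ (n+1)) y‖ * ‖y‖ ^ n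
    rw [h1, h2, mul_pow]
    apply le_of_eq
    ring
  · -- spectral radius
    have hgel := spectrum.pow_nnnorm_pow_one_div_tendsto_nhds_spectralRadius T
    have hreal : Filter.Tendsto (fun m : ℕ => (w 1 * (w 2)^(m-1)) ^ ((1:ℝ)/m)) Filter.atTop
        (nhds (w 2)) := by
      have hc : (0:ℝ) < w 1 / w 2 := by positivity
      have haux : ∀ m : ℕ, 1 ≤ m →
          (w 1 * (w 2)^(m-1)) ^ ((1:ℝ)/m) = (w 1 / w 2) ^ ((1:ℝ)/m) * w 2 := by
        intro m hm
        have hm0 : (m:ℝ) ≠ 0 := by positivity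
        have h1 : w 1 * (w 2)^(m-1) = (w 1 / w 2) * (w 2)^(m:ℕ) := by
          rw [show (m:ℕ) = (m-1) + 1 by omega, pow_succ]
          field_simp
          ring
          congr 1
          omega
        rw [h1, Real.mul_rpow hc.le (by positivity)]
        congr 1
        rw [← Real.rpow_natCast (w 2) m, ← Real.rpow_mul hw2.le]
        rw [mul_one_div, div_self hm0, Real.rpow_one]
      have hlim1 : Filter.Tendsto (fun m : ℕ => (w 1 / w 2) ^ ((1:ℝ)/m)) Filter.atTop (nhds 1) := by
        have h0 : Filter.Tendsto (fun m : ℕ => Real.log (w 1 / w 2) * ((1:ℝ)/m)) Filter.atTop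
            (nhds 0) := by
          have := tendsto_one_div_atTop_nhds_zero_nat.const_mul (Real.log (w 1 / w 2))
          simpa using this
        have h1 := (Real.continuous_exp.tendsto 0).comp h0
        rw [Real.exp_zero] at h1
        refine h1.congr fun m => ?_
        simp only [Function.comp_apply]
        rw [Real.rpow_def_of_pos hc]
      have h2 := hlim1.mul_const (w 2)
      rw [one_mul] at h2
      refine Filter.Tendsto.congr' ?_ h2
      filter_upwards [Filter.eventually_ge_atTop 1] with m hm
      exact (haux m hm).symm
    have hofreal := (ENNReal.continuous_ofReal.tendsto (w 2)).comp hreal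
    have heq : (fun m : ℕ => ENNReal.ofReal ((w 1 * (w 2)^(m-1)) ^ ((1:ℝ)/m))) =ᶠ[Filter.atTop]
        (fun m : ℕ => (‖T ^ m‖₊ : ℝ≥0∞) ^ ((1:ℝ)/m)) := by
      filter_upwards [Filter.eventually_ge_atTop 1] with m hm
      rw [show ((‖T ^ m‖₊ : ℝ≥0∞)) = ENNReal.ofReal ‖T ^ m‖ from (ofReal_norm _).symm, hpow_norm m hm,
        ← ENNReal.ofReal_rpow_of_pos (by positivity)]
    have hfinal := (Filter.Tendsto.congr' heq hofreal)
    exact tendsto_nhds_unique hgel hfinal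
end

section
/- Suppose T ∈ L(H) is (n,k)-quasi-*-paranormal and the range of T^k is not dense. Write T = [[T₁, T₂],[0, T₃]] with respect to the orthogonal decomposition H = closure(T^k H) ⊕ ker(T^{*k}). Then T₁ is n-*-paranormal, T₃^k = 0, and σ(T) = σ(T₁) ∪ {0}. -/
open ContinuousLinearMap

private lemma alg_sub_apply {E : Type*} [NormedAddCommGroup E] [NormedSpace ℂ E]
    (S : E →L[ℂ] E) (z : ℂ) (x : E) :
    (algebraMap ℂ (E →L[ℂ] E) z - S) x = z • x - S x := by
  simp [Algebra.algebraMap_eq_smul_one]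

private lemma norm_le_of_sq {a b : ℝ} (ha : 0 ≤ a) (hb : 0 ≤ b)
    (h : a * a ≤ b * a) : a ≤ b := by
  rcases eq_or_lt_of_le ha with h0 | h0
  · linarith
  · exact le_of_mul_le_mul_right (by linarith) h0

set_option maxHeartbeats 1000000 in
/-- Suppose `T` is `(n,k)`-quasi-*-paranormal and the range of `T^k` is not dense. With respect
to `H = closure(T^k H) ⊕ ker(T^{*k})`, write `T = [[T₁, T₂],[0, T₃]]`, i.e. `T₁` is the
restriction of `T` to `M = closure(T^k H)` and `T₃` is the compression of `T` to
`N = ker(T^{*k}) = M^⊥`. Then `T₁` is `n`-*-paranormal, `T₃^k = 0` and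
`σ(T) = σ(T₁) ∪ {0}`. -/
theorem stmt_8 {H : Type*} [NormedAddCommGroup H] [InnerProductSpace ℂ H] [CompleteSpace H]
    (T : H →L[ℂ] H) (n k : ℕ) (hk : 1 ≤ k)
    (hT : ∀ x : H, ‖adjoint T (T ^ k <| x)‖ ^ (n + 1) ≤
      ‖T ^ (n + 1) <| T ^ k <| x‖ * ‖T ^ k <| x‖ ^ n)
    (M N : Submodule ℂ H) [CompleteSpace M] [CompleteSpace N]
    (hM : M = (LinearMap.range ((T ^ k : H →L[ℂ] H) : H →ₗ[ℂ] H)).topologicalClosure)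
    (hN : N = LinearMap.ker (((adjoint T) ^ k : H →L[ℂ] H) : H →ₗ[ℂ] H))
    (hndense : M ≠ ⊤)
    (T₁ : M →L[ℂ] M) (hT₁ : ∀ x : M, (T₁ x : H) = T x)
    (T₃ : N →L[ℂ] N) (hT₃ : ∀ y : N, T y - (T₃ y : H) ∈ M) :
    (∀ x : M, ‖adjoint T₁ x‖ ^ (n + 1) ≤ ‖T₁ ^ (n + 1) <| x‖ * ‖x‖ ^ n)
      ∧ T₃ ^ k = 0 ∧ spectrum ℂ T = spectrum ℂ T₁ ∪ {0} := by
  -- `N = Mᗮ`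
  have hpowadj : (adjoint T) ^ k = adjoint (T ^ k) := by
    rw [← star_eq_adjoint, ← star_eq_adjoint, ← star_pow]
  have hadjinner : ∀ (z x : H),
      (inner ℂ ((T ^ k) z) x : ℂ) = inner ℂ z (((adjoint T) ^ k) x) := by
    intro z x
    rw [hpowadj, adjoint_inner_right]
  have hMN : N = Mᗮ := by
    have hRM' : LinearMap.range ((T ^ k : H →L[ℂ] H) : H →ₗ[ℂ] H) ≤ M := hM ▸ Submodule.le_topologicalClosure _
    have h1 : Mᗮ = (LinearMap.range ((T ^ k : H →L[ℂ] H) : H →ₗ[ℂ] H))ᗮ := by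
      refine le_antisymm (Submodule.orthogonal_le hRM') ?_
      intro x hx
      rw [Submodule.mem_orthogonal]
      intro u hu
      have hsub : (M : Set H) ⊆ {y : H | (inner ℂ y x : ℂ) = 0} := by
        rw [hM, Submodule.topologicalClosure_coe]
        apply closure_minimal
        · intro y hy
          exact (Submodule.mem_orthogonal _ x).mp hx y hy
        · exact isClosed_eq (Continuous.inner continuous_id continuous_const)
            continuous_const
      exact hsub hu
    rw [hN, h1]
    ext x
    simp only [LinearMap.mem_ker, Submodule.mem_orthogonal, ContinuousLinearMap.coe_coe]
    constructor
    · rintro h u ⟨z, rfl⟩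
      rw [ContinuousLinearMap.coe_coe, hadjinner, h, inner_zero_right]
    · intro h
      have := h ((T ^ k) (((adjoint T) ^ k) x)) ⟨_, rfl⟩
      rw [hadjinner] at this
      exact inner_self_eq_zero.mp this
  subst hMN
  -- Basic facts about `M`
  have hMcl : IsClosed (M : Set H) := hM ▸ Submodule.isClosed_topologicalClosure _
  have hRM : LinearMap.range ((T ^ k : H →L[ℂ] H) : H →ₗ[ℂ] H) ≤ M := hM ▸ Submodule.le_topologicalClosure _
  have hMinv : ∀ x ∈ M, T x ∈ M := by
    have hle : M ≤ Submodule.comap (T : H →ₗ[ℂ] H) M := by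
      nth_rewrite 1 [hM]
      apply Submodule.topologicalClosure_minimal
      · rintro x ⟨z, rfl⟩
        have e : T ((T ^ k) z) = (T ^ k) (T z) := by
          rw [← ContinuousLinearMap.mul_apply, ← pow_succ', pow_succ, ContinuousLinearMap.mul_apply]
        simp only [Submodule.mem_comap, ContinuousLinearMap.coe_coe, e]
        exact hRM ⟨T z, rfl⟩
      · show IsClosed (⇑T ⁻¹' (M : Set H))
        exact hMcl.preimage T.continuous
    exact fun x hx => hle hx
  -- projections
  set P := Submodule.orthogonalProjectionOnto M with hP
  set Q := Submodule.orthogonalProjectionOnto Mᗮ with hQ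
  have hPQ : ∀ x : H, (P x : H) + (Q x : H) = x :=
    fun x => Submodule.starProjection_add_starProjection_orthogonal (K := M) x
  have hQ0 : ∀ x ∈ M, Q x = 0 := by
    intro x hx
    rw [hQ, Submodule.orthogonalProjectionOnto_eq_zero_iff, Submodule.orthogonal_orthogonal]
    exact hx
  have hQmem : ∀ y : Mᗮ, Q (y : H) = y := fun y =>
    Submodule.orthogonalProjectionOnto_mem_subspace_eq_self y
  have hMiff : ∀ x : H, Q x = 0 ↔ x ∈ M := by
    intro x
    rw [hQ, Submodule.orthogonalProjectionOnto_eq_zero_iff, Submodule.orthogonal_orthogonal]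
  have hQT : ∀ x : H, Q (T x) = T₃ (Q x) := by
    intro x
    have hx : T x = T ((P x : H)) + ((T ((Q x : H)) - ((T₃ (Q x) : H))) + (T₃ (Q x) : H)) := by
      rw [sub_add_cancel, ← map_add, hPQ]
    rw [hx, map_add, map_add, hQ0 _ (hMinv _ (P x).2), hQ0 _ (hT₃ (Q x)), hQmem,
      zero_add, zero_add]
  have hQTm : ∀ (m : ℕ) (x : H), Q ((T ^ m) x) = (T₃ ^ m) (Q x) := by
    intro m
    induction m with
    | zero => intro x; simp
    | succ m ih =>
      intro x
      have e1 : (T ^ (m + 1)) x = T ((T ^ m) x) := by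
        rw [pow_succ', ContinuousLinearMap.mul_apply]
      have e2 : (T₃ ^ (m + 1)) (Q x) = T₃ ((T₃ ^ m) (Q x)) := by
        rw [pow_succ', ContinuousLinearMap.mul_apply]
      rw [e1, e2, hQT, ih]
  -- Part 2 : T₃ ^ k = 0
  have part2 : T₃ ^ k = 0 := by
    ext y
    have := hQTm k (y : H)
    rw [hQmem, hQ0 _ (hRM ⟨(y : H), rfl⟩ : (T ^ k) (y : H) ∈ M)] at this
    simp [← this]
  -- Part 1
  have hcl : ∀ x ∈ M, ‖adjoint T x‖ ^ (n + 1) ≤ ‖(T ^ (n + 1)) x‖ * ‖x‖ ^ n := by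
    intro x hx
    have hxcl : x ∈ closure ((LinearMap.range ((T ^ k : H →L[ℂ] H) : H →ₗ[ℂ] H) : Submodule ℂ H) : Set H) := by
      rw [← Submodule.topologicalClosure_coe, ← hM]; exact hx
    have hsub : closure ((LinearMap.range ((T ^ k : H →L[ℂ] H) : H →ₗ[ℂ] H) : Submodule ℂ H) : Set H) ⊆
        {y : H | ‖adjoint T y‖ ^ (n + 1) ≤ ‖(T ^ (n + 1)) y‖ * ‖y‖ ^ n} := by
      apply closure_minimal
      · rintro y ⟨z, rfl⟩
        exact hT z
      · exact isClosed_le (((adjoint T).continuous.norm).pow (n + 1))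
          (((T ^ (n + 1)).continuous.norm).mul (continuous_norm.pow n))
    exact hsub hxcl
  have hpowcoe : ∀ (m : ℕ) (x : M), (((T₁ ^ m) x : M) : H) = (T ^ m) (x : H) := by
    intro m
    induction m with
    | zero => intro x; simp
    | succ m ih =>
      intro x
      have e1 : (T₁ ^ (m + 1)) x = (T₁ ^ m) (T₁ x) := by rw [pow_succ, ContinuousLinearMap.mul_apply]
      have e2 : (T ^ (m + 1)) (x : H) = (T ^ m) (T (x : H)) := by rw [pow_succ, ContinuousLinearMap.mul_apply]
      rw [e1, e2, ih (T₁ x), hT₁]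
  have hadj1 : ∀ x : M, ‖adjoint T₁ x‖ ≤ ‖adjoint T (x : H)‖ := by
    intro x
    set w := adjoint T₁ x with hw
    have key : (inner ℂ (w : H) (w : H) : ℂ) = inner ℂ (adjoint T (x : H)) (w : H) := by
      calc (inner ℂ (w : H) (w : H) : ℂ) = inner ℂ w w := (Submodule.coe_inner _ _ _).symm
        _ = inner ℂ x (T₁ w) := adjoint_inner_left T₁ w x
        _ = inner ℂ (x : H) ((T₁ w : M) : H) := Submodule.coe_inner _ _ _
        _ = inner ℂ (x : H) (T (w : H)) := by rw [hT₁]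
        _ = inner ℂ (adjoint T (x : H)) (w : H) := (adjoint_inner_left T (w : H) (x : H)).symm
    have hww : ‖w‖ * ‖w‖ ≤ ‖adjoint T (x : H)‖ * ‖w‖ := by
      have h1 : ‖w‖ * ‖w‖ = RCLike.re (inner ℂ (w : H) (w : H) : ℂ) := by
        rw [inner_self_eq_norm_mul_norm, Submodule.norm_coe]
      rw [h1, key]
      calc RCLike.re (inner ℂ (adjoint T (x : H)) (w : H) : ℂ)
          ≤ ‖adjoint T (x : H)‖ * ‖(w : H)‖ := re_inner_le_norm _ _
        _ = ‖adjoint T (x : H)‖ * ‖w‖ := by rw [Submodule.norm_coe]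
    exact norm_le_of_sq (norm_nonneg _) (norm_nonneg _) hww
  have part1 : ∀ x : M, ‖adjoint T₁ x‖ ^ (n + 1) ≤ ‖(T₁ ^ (n + 1)) x‖ * ‖x‖ ^ n := by
    intro x
    calc ‖adjoint T₁ x‖ ^ (n + 1) ≤ ‖adjoint T (x : H)‖ ^ (n + 1) :=
          pow_le_pow_left₀ (norm_nonneg _) (hadj1 x) _
      _ ≤ ‖(T ^ (n + 1)) (x : H)‖ * ‖(x : H)‖ ^ n := hcl _ x.2
      _ = ‖(T₁ ^ (n + 1)) x‖ * ‖x‖ ^ n := by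
          rw [← hpowcoe, Submodule.norm_coe, Submodule.norm_coe]
  -- Part 3
  have hA3unit : ∀ z : ℂ, z ≠ 0 → IsUnit (algebraMap ℂ (↥Mᗮ →L[ℂ] ↥Mᗮ) z - T₃) := by
    intro z hz
    have hnil : IsNilpotent (-T₃) := IsNilpotent.neg ⟨k, part2⟩
    have hu : IsUnit (algebraMap ℂ (↥Mᗮ →L[ℂ] ↥Mᗮ) z) :=
      (isUnit_iff_ne_zero.mpr hz).map (algebraMap ℂ _)
    have hcomm : Commute (-T₃) (algebraMap ℂ (↥Mᗮ →L[ℂ] ↥Mᗮ) z) :=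
      (Algebra.commutes z (-T₃)).symm
    have := hnil.isUnit_add_left_of_commute hu hcomm
    rwa [sub_eq_add_neg]
  have hQA : ∀ (z : ℂ) (x : H),
      Q ((algebraMap ℂ (H →L[ℂ] H) z - T) x) =
        (algebraMap ℂ (↥Mᗮ →L[ℂ] ↥Mᗮ) z - T₃) (Q x) := by
    intro z x
    rw [alg_sub_apply, alg_sub_apply, map_sub, map_smul, hQT]
  have hA1coe : ∀ (z : ℂ) (u : M),
      (((algebraMap ℂ (↥M →L[ℂ] ↥M) z - T₁) u : M) : H) =
        (algebraMap ℂ (H →L[ℂ] H) z - T) (u : H) := by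
    intro z u
    rw [alg_sub_apply, alg_sub_apply]
    push_cast
    rw [hT₁]
  have key_b : ∀ z : ℂ, z ≠ 0 →
      Function.Bijective ⇑(algebraMap ℂ (H →L[ℂ] H) z - T) →
      Function.Bijective ⇑(algebraMap ℂ (↥M →L[ℂ] ↥M) z - T₁) := by
    intro z hz hbij
    have hA3inj := (ContinuousLinearMap.isUnit_iff_bijective.mp (hA3unit z hz)).injective
    constructor
    · intro u v huv
      have : (algebraMap ℂ (H →L[ℂ] H) z - T) (u : H) =
          (algebraMap ℂ (H →L[ℂ] H) z - T) (v : H) := by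
        rw [← hA1coe, ← hA1coe, huv]
      exact Subtype.ext (hbij.injective this)
    · intro m
      obtain ⟨x, hx⟩ := hbij.surjective (m : H)
      have hQx : Q x = 0 := by
        apply hA3inj
        rw [← hQA, hx, hQ0 _ m.2, map_zero]
      refine ⟨⟨x, (hMiff x).mp hQx⟩, ?_⟩
      apply Subtype.ext
      rw [hA1coe]
      exact hx
  have key_a : ∀ z : ℂ, z ≠ 0 →
      Function.Bijective ⇑(algebraMap ℂ (↥M →L[ℂ] ↥M) z - T₁) →
      Function.Bijective ⇑(algebraMap ℂ (H →L[ℂ] H) z - T) := by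
    intro z hz hbij1
    have hA3bij := ContinuousLinearMap.isUnit_iff_bijective.mp (hA3unit z hz)
    constructor
    · intro u v huv
      have hw : (algebraMap ℂ (H →L[ℂ] H) z - T) (u - v) = 0 := by
        rw [map_sub, huv, sub_self]
      have hQuv : Q (u - v) = 0 := by
        apply hA3bij.injective
        rw [← hQA, hw, map_zero, map_zero]
      have hmem : u - v ∈ M := (hMiff _).mp hQuv
      have : (⟨u - v, hmem⟩ : M) = 0 := by
        apply hbij1.injective
        apply Subtype.ext
        rw [hA1coe]
        simpa using hw
      have := congrArg (Subtype.val) this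
      simpa [sub_eq_zero] using this
    · intro y
      obtain ⟨v, hv⟩ := hA3bij.surjective (Q y)
      have hQw : Q (y - (algebraMap ℂ (H →L[ℂ] H) z - T) (v : H)) = 0 := by
        rw [map_sub, hQA, hQmem, hv, sub_self]
      obtain ⟨u, hu⟩ := hbij1.surjective
        ⟨y - (algebraMap ℂ (H →L[ℂ] H) z - T) (v : H), (hMiff _).mp hQw⟩
      refine ⟨(u : H) + (v : H), ?_⟩
      have hcu := congrArg (Subtype.val) hu
      rw [hA1coe] at hcu
      rw [map_add, hcu]
      simp
  have h0spec : (0 : ℂ) ∈ spectrum ℂ T := by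
    rw [spectrum.mem_iff]
    intro hu
    rw [map_zero, zero_sub] at hu
    have hu2 := hu.neg
    rw [neg_neg] at hu2
    have hbT : Function.Bijective ⇑T :=
      ContinuousLinearMap.isUnit_iff_bijective.mp hu2
    have hs : ∀ m : ℕ, Function.Surjective ⇑(T ^ m) := by
      intro m
      induction m with
      | zero => simpa using Function.surjective_id
      | succ m ih =>
        intro y
        obtain ⟨u, hu'⟩ := hbT.surjective y
        obtain ⟨v, hv⟩ := ih u
        exact ⟨v, by rw [pow_succ', ContinuousLinearMap.mul_apply, hv, hu']⟩
    apply hndense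
    apply top_unique
    rw [hM, ← LinearMap.range_eq_top.mpr (hs k)]
    exact Submodule.le_topologicalClosure _
  refine ⟨part1, part2, ?_⟩
  ext z
  simp only [Set.mem_union, Set.mem_singleton_iff, spectrum.mem_iff]
  constructor
  · intro hzT
    by_cases hz : z = 0
    · exact Or.inr hz
    · left
      intro hu1
      exact hzT (ContinuousLinearMap.isUnit_iff_bijective.mpr
        (key_a z hz (ContinuousLinearMap.isUnit_iff_bijective.mp hu1)))
  · intro h
    rcases h with h1 | rfl
    · by_cases hz : z = 0
      · subst hz
        exact spectrum.mem_iff.mp h0spec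
      · intro huT
        exact h1 (ContinuousLinearMap.isUnit_iff_bijective.mpr
          (key_b z hz (ContinuousLinearMap.isUnit_iff_bijective.mp huT)))
    · exact spectrum.mem_iff.mp h0spec
end

section
/- Let A ∈ L(H) be n-*-paranormal and surjective, C ∈ L(K) with C^k = 0, and B ∈ L(K, H). Then the operator matrix T = [[A, B],[0, C]] on H ⊕ K is similar to an (n,k)-quasi-*-paranormal operator; in fact T is similar to A ⊕ C, and A ⊕ C is (n,k)-quasi-*-paranormal. -/
open ContinuousLinearMap

/-- If `A` is `n`-*-paranormal and surjective, `C^k = 0`, and `T = [[A, B],[0, C]]` on the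
Hilbert space `H ⊕ K`, then `T` is similar to the direct sum `R = A ⊕ C`, and `R` is
`(n,k)`-quasi-*-paranormal; hence `T` is similar to an `(n,k)`-quasi-*-paranormal operator. -/
theorem stmt_9 {H K : Type*} [NormedAddCommGroup H] [InnerProductSpace ℂ H] [CompleteSpace H]
    [NormedAddCommGroup K] [InnerProductSpace ℂ K] [CompleteSpace K]
    (A : H →L[ℂ] H) (B : K →L[ℂ] H) (C : K →L[ℂ] K) (n k : ℕ) (hk : 1 ≤ k)
    (hA : ∀ x : H, ‖adjoint A x‖ ^ (n + 1) ≤ ‖A ^ (n + 1) <| x‖ * ‖x‖ ^ n)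
    (hAsurj : Function.Surjective A) (hC : C ^ k = 0)
    (T R : WithLp 2 (H × K) →L[ℂ] WithLp 2 (H × K))
    (hT : ∀ z : WithLp 2 (H × K), T z = (WithLp.equiv 2 (H × K)).symm
      (A (WithLp.equiv 2 (H × K) z).1 + B (WithLp.equiv 2 (H × K) z).2,
        C (WithLp.equiv 2 (H × K) z).2))
    (hR : ∀ z : WithLp 2 (H × K), R z = (WithLp.equiv 2 (H × K)).symm
      (A (WithLp.equiv 2 (H × K) z).1, C (WithLp.equiv 2 (H × K) z).2)) :
    (∃ S : WithLp 2 (H × K) ≃L[ℂ] WithLp 2 (H × K), ∀ z, S (T z) = R (S z))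
      ∧ ∀ z : WithLp 2 (H × K), ‖adjoint R (R ^ k <| z)‖ ^ (n + 1) ≤
          ‖R ^ (n + 1) <| R ^ k <| z‖ * ‖R ^ k <| z‖ ^ n := by
  set e := WithLp.equiv 2 (H × K) with he
  -- A* is injective since A is surjective
  have hAstar_inj : ∀ x : H, adjoint A x = 0 → x = 0 := by
    intro x hx
    obtain ⟨y, hy⟩ := hAsurj x
    have h1 : (inner ℂ (A y) x : ℂ) = 0 := by
      rw [← adjoint_inner_right]
      simp [hx]
    rw [hy] at h1
    exact inner_self_eq_zero.mp h1
  -- A is injective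
  have hAinj : Function.Injective A := by
    rw [injective_iff_map_eq_zero]
    intro x hx
    have hpow : (A ^ (n + 1)) x = 0 := by
      rw [pow_succ, ContinuousLinearMap.mul_apply, hx, map_zero]
    have h2 := hA x
    rw [hpow] at h2
    simp only [norm_zero, zero_mul] at h2
    have h4 : ‖adjoint A x‖ ^ (n + 1) = 0 :=
      le_antisymm h2 (pow_nonneg (norm_nonneg _) _)
    have h3 : ‖adjoint A x‖ = 0 := by
      exact pow_eq_zero_iff (Nat.succ_ne_zero n) |>.mp h4
    exact hAstar_inj x (norm_eq_zero.mp h3)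
  -- A is an invertible operator
  let Ainv : H ≃L[ℂ] H := ContinuousLinearEquiv.ofBijective A
    ((LinearMap.ker_eq_bot (f := (A : H →ₗ[ℂ] H))).mpr hAinj) (LinearMap.range_eq_top.mpr hAsurj)
  have hAinv_apply : ∀ x : H, A (Ainv.symm x) = x := fun x => Ainv.apply_symm_apply x
  set N : H →L[ℂ] H := (Ainv.symm : H →L[ℂ] H) with hN
  have hAN : ∀ x : H, A (N x) = x := hAinv_apply
  -- The Rosenblum solution S₀ with A S₀ - S₀ C = B
  set S₀ : K →L[ℂ] H := ∑ j ∈ Finset.range k, (N ^ (j + 1)).comp (B.comp (C ^ j)) with hS₀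
  have key : ∀ y : K, A (S₀ y) = B y + S₀ (C y) := by
    intro y
    have hf : ∀ j : ℕ, A ((N ^ (j + 1)) (B ((C ^ j) y))) = (N ^ j) (B ((C ^ j) y)) := by
      intro j
      rw [pow_succ', ContinuousLinearMap.mul_apply, hAN]
    have hS₀y : S₀ y = ∑ j ∈ Finset.range k, (N ^ (j + 1)) (B ((C ^ j) y)) := by
      rw [hS₀]; simp [ContinuousLinearMap.sum_apply]
    have hS₀Cy : S₀ (C y) = ∑ j ∈ Finset.range k, (N ^ (j + 1)) (B ((C ^ (j + 1)) y)) := by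
      rw [hS₀]; simp only [ContinuousLinearMap.sum_apply, comp_apply]
      refine Finset.sum_congr rfl fun j _ => ?_
      simp [pow_succ, mul_apply]
    have hAS₀y : A (S₀ y) = ∑ j ∈ Finset.range k, (N ^ j) (B ((C ^ j) y)) := by
      rw [hS₀y, map_sum]
      exact Finset.sum_congr rfl fun j _ => hf j
    -- telescoping
    set g : ℕ → H := fun j => (N ^ j) (B ((C ^ j) y)) with hg
    have hgk : g k = 0 := by simp only [hg, hC, zero_apply, map_zero]
    have htel : ∑ j ∈ Finset.range k, g j = g 0 + ∑ j ∈ Finset.range k, g (j + 1) - g k := by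
      have h1 : ∑ j ∈ Finset.range (k + 1), g j
          = ∑ j ∈ Finset.range k, g j + g k := Finset.sum_range_succ g k
      have h2 : ∑ j ∈ Finset.range (k + 1), g j
          = ∑ j ∈ Finset.range k, g (j + 1) + g 0 := Finset.sum_range_succ' g k
      rw [h1] at h2
      rw [eq_sub_iff_add_eq, h2]
      exact add_comm _ _
    have hg0 : g 0 = B y := by simp [hg]
    have hS₀Cy' : S₀ (C y) = ∑ j ∈ Finset.range k, g (j + 1) := by
      rw [hS₀Cy]
    rw [hAS₀y]
    show ∑ j ∈ Finset.range k, g j = B y + S₀ (C y)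
    rw [htel, hgk, hg0, hS₀Cy', sub_zero]
  -- Construct the similarity S
  let L : WithLp 2 (H × K) ≃L[ℂ] H × K := WithLp.prodContinuousLinearEquiv 2 ℂ H K
  let P : (H × K) →L[ℂ] (H × K) :=
    ((fst ℂ H K) + S₀.comp (snd ℂ H K)).prod (snd ℂ H K)
  let P' : (H × K) →L[ℂ] (H × K) :=
    ((fst ℂ H K) - S₀.comp (snd ℂ H K)).prod (snd ℂ H K)
  have hPP' : Function.LeftInverse P' P := by
    intro x
    simp [P, P', prod_apply, add_apply, sub_apply, comp_apply]
  have hP'P : Function.LeftInverse P P' := by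
    intro x
    simp [P, P', prod_apply, add_apply, sub_apply, comp_apply]
  let Pe : (H × K) ≃L[ℂ] (H × K) := ContinuousLinearEquiv.equivOfInverse P P' hPP' hP'P
  let S : WithLp 2 (H × K) ≃L[ℂ] WithLp 2 (H × K) := L.trans (Pe.trans L.symm)
  have hSapp : ∀ w : WithLp 2 (H × K),
      S w = e.symm ((e w).1 + S₀ (e w).2, (e w).2) := fun w => rfl
  constructor
  · refine ⟨S, fun z => ?_⟩
    rw [hSapp, hT, hR, hSapp]
    simp only [WithLp.equiv_symm_apply, WithLp.toLp_fst, WithLp.toLp_snd, WithLp.ofLp_toLp, Equiv.apply_symm_apply]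
    rw [map_add, key, ← add_assoc]
  · -- adjoint of R
    set R' : WithLp 2 (H × K) →L[ℂ] WithLp 2 (H × K) :=
      (L.symm : (H × K) →L[ℂ] WithLp 2 (H × K)).comp
        (((adjoint A).prodMap (adjoint C)).comp (L : WithLp 2 (H × K) →L[ℂ] (H × K))) with hR'
    have hR'apply : ∀ w : WithLp 2 (H × K),
        R' w = e.symm (adjoint A (e w).1, adjoint C (e w).2) := fun w => rfl
    have hadj : R' = adjoint R := by
      rw [eq_adjoint_iff]
      intro u v
      rw [hR'apply, hR]
      rw [WithLp.prod_inner_apply, WithLp.prod_inner_apply]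
      simp only [he, WithLp.equiv_symm_apply, WithLp.toLp_fst, WithLp.toLp_snd, WithLp.ofLp_toLp]
      rw [adjoint_inner_left, adjoint_inner_left]
      rfl
    -- powers of R
    have hpow : ∀ (m : ℕ) (z : WithLp 2 (H × K)),
        (R ^ m) z = e.symm ((A ^ m) (e z).1, (C ^ m) (e z).2) := by
      intro m
      induction m with
      | zero =>
        intro z
        simp only [pow_zero, one_apply]
        rfl
      | succ m ih =>
        intro z
        rw [pow_succ', ContinuousLinearMap.mul_apply, ih, hR]
        show (e.symm (A ((e (e.symm ((A ^ m) (e z).1, (C ^ m) (e z).2))).1),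
            C ((e (e.symm ((A ^ m) (e z).1, (C ^ m) (e z).2))).2)) : WithLp 2 (H × K))
          = e.symm ((A ^ (m + 1)) (e z).1, (C ^ (m + 1)) (e z).2)
        rw [Equiv.apply_symm_apply]
        rw [pow_succ' A, ContinuousLinearMap.mul_apply, pow_succ' C, ContinuousLinearMap.mul_apply]
    have hnorm : ∀ a : H, ‖e.symm (a, (0 : K))‖ = ‖a‖ := by
      intro a
      rw [WithLp.prod_norm_eq_of_L2]
      simp only [he, WithLp.equiv_symm_apply, WithLp.toLp_fst, WithLp.toLp_snd, WithLp.ofLp_toLp, norm_zero]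
      rw [zero_pow two_ne_zero, add_zero, Real.sqrt_sq (norm_nonneg a)]
    intro z
    set x : H := (e z).1 with hx
    have h1 : (R ^ k) z = e.symm ((A ^ k) x, 0) := by
      rw [hpow k z, hC]; rfl
    have h2 : (R ^ (n + 1)) ((R ^ k) z) = e.symm ((A ^ (n + 1)) ((A ^ k) x), 0) := by
      rw [h1, hpow]
      simp only [WithLp.equiv_symm_apply, WithLp.toLp_fst, WithLp.toLp_snd, WithLp.ofLp_toLp, Equiv.apply_symm_apply, map_zero]
    have h3 : adjoint R ((R ^ k) z) = e.symm (adjoint A ((A ^ k) x), 0) := by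
      rw [← hadj, h1, hR'apply]
      simp only [WithLp.equiv_symm_apply, WithLp.toLp_fst, WithLp.toLp_snd, WithLp.ofLp_toLp, Equiv.apply_symm_apply, map_zero]
    rw [h3, h2, h1, hnorm, hnorm, hnorm]
    exact hA ((A ^ k) x)
end

section
/- If A is n-*-paranormal on H, C ∈ L(K) satisfies C^k = 0, then the direct sum R = A ⊕ C on H ⊕ K is (n,k)-quasi-*-paranormal. -/
open ContinuousLinearMap

/-- If `A` is `n`-*-paranormal on `H` and `C^k = 0` on `K` (with `k ≥ 1`), then the direct sum
`R = A ⊕ C` on the Hilbert space `H ⊕ K` is `(n,k)`-quasi-*-paranormal. -/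
theorem stmt_10 {H K : Type*} [NormedAddCommGroup H] [InnerProductSpace ℂ H] [CompleteSpace H]
    [NormedAddCommGroup K] [InnerProductSpace ℂ K] [CompleteSpace K]
    (A : H →L[ℂ] H) (C : K →L[ℂ] K) (n k : ℕ) (hk : 1 ≤ k)
    (hA : ∀ x : H, ‖adjoint A x‖ ^ (n + 1) ≤ ‖A ^ (n + 1) <| x‖ * ‖x‖ ^ n)
    (hC : C ^ k = 0)
    (R : WithLp 2 (H × K) →L[ℂ] WithLp 2 (H × K))
    (hR : ∀ z : WithLp 2 (H × K), R z = (WithLp.equiv 2 (H × K)).symm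
      (A (WithLp.equiv 2 (H × K) z).1, C (WithLp.equiv 2 (H × K) z).2)) :
    ∀ z : WithLp 2 (H × K), ‖adjoint R (R ^ k <| z)‖ ^ (n + 1) ≤
      ‖R ^ (n + 1) <| R ^ k <| z‖ * ‖R ^ k <| z‖ ^ n := by
  -- components of powers
  have hRfst : ∀ z : WithLp 2 (H × K), (R z).fst = A z.fst := by
    intro z; rw [hR z]; rfl
  have hRsnd : ∀ z : WithLp 2 (H × K), (R z).snd = C z.snd := by
    intro z; rw [hR z]; rfl
  have hpow : ∀ (m : ℕ) (z : WithLp 2 (H × K)),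
      ((R ^ m) z).fst = (A ^ m) z.fst ∧ ((R ^ m) z).snd = (C ^ m) z.snd := by
    intro m
    induction m with
    | zero => intro z; simp
    | succ m ih =>
      intro z
      have h1 : (R ^ (m + 1)) z = (R ^ m) (R z) := by
        rw [pow_succ]; rfl
      rw [h1]
      refine ⟨?_, ?_⟩
      · rw [(ih (R z)).1, hRfst, pow_succ, ContinuousLinearMap.mul_apply]
      · rw [(ih (R z)).2, hRsnd, pow_succ, ContinuousLinearMap.mul_apply]
  -- norm of an element with zero second component
  have hnorm : ∀ w : WithLp 2 (H × K), w.snd = 0 → ‖w‖ = ‖w.fst‖ := by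
    intro w hw
    have h2 := WithLp.prod_norm_sq_eq_of_L2 w
    rw [hw, norm_zero] at h2
    have h3 : ‖w‖ ^ 2 = ‖w.fst‖ ^ 2 := by rw [h2]; ring
    calc ‖w‖ = Real.sqrt (‖w‖ ^ 2) := (Real.sqrt_sq (norm_nonneg w)).symm
      _ = Real.sqrt (‖w.fst‖ ^ 2) := by rw [h3]
      _ = ‖w.fst‖ := Real.sqrt_sq (norm_nonneg w.fst)
  -- adjoint formula
  have hadj : ∀ w : WithLp 2 (H × K),
      adjoint R w = (WithLp.equiv 2 (H × K)).symm (adjoint A w.fst, adjoint C w.snd) := by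
    intro w
    apply ext_inner_right ℂ
    intro v
    rw [adjoint_inner_left, WithLp.prod_inner_apply, WithLp.prod_inner_apply, hR v]
    simp only [WithLp.equiv_symm_apply, WithLp.equiv_apply, WithLp.ofLp_toLp, WithLp.ofLp_fst, WithLp.ofLp_snd]
    rw [adjoint_inner_left, adjoint_inner_left]
  intro z
  set w := (R ^ k) z with hw
  have hw2 : w.snd = 0 := by
    rw [hw, (hpow k z).2, hC]; rfl
  have hwn : ‖w‖ = ‖w.fst‖ := hnorm w hw2
  -- adjoint R w
  have hadjw : ‖adjoint R w‖ = ‖adjoint A w.fst‖ := by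
    rw [hadj w]
    have : ((WithLp.equiv 2 (H × K)).symm (adjoint A w.fst, adjoint C w.snd)).snd = 0 := by
      show adjoint C w.snd = 0
      rw [hw2, map_zero]
    rw [hnorm _ this]
    rfl
  have hRnw : ‖(R ^ (n + 1)) w‖ = ‖(A ^ (n + 1)) w.fst‖ := by
    have h2 : ((R ^ (n + 1)) w).snd = 0 := by rw [(hpow (n + 1) w).2, hw2, map_zero]
    rw [hnorm _ h2, (hpow (n + 1) w).1]
  rw [hadjw, hRnw, hwn]
  exact hA w.fst
end

section
/- Let T be (n,k)-quasi-*-paranormal and λ a nonzero complex number. If Tx = λx, then T*x = conj(λ)x. Consequently ker(T − λ) ⊆ ker(T* − conj(λ)). -/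
open ContinuousLinearMap
open scoped InnerProductSpace

/-- If `T` is `(n,k)`-quasi-*-paranormal, `λ ≠ 0` and `T x = λ x`, then `T* x = conj λ • x`;
consequently `ker (T - λ) ⊆ ker (T* - conj λ)`. -/
theorem stmt_12 {H : Type*} [NormedAddCommGroup H] [InnerProductSpace ℂ H] [CompleteSpace H]
    (T : H →L[ℂ] H) (n k : ℕ)
    (hT : ∀ x : H, ‖adjoint T (T ^ k <| x)‖ ^ (n + 1) ≤
      ‖T ^ (n + 1) <| T ^ k <| x‖ * ‖T ^ k <| x‖ ^ n)
    (lam : ℂ) (hlam : lam ≠ 0) :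
    (∀ x : H, T x = lam • x → adjoint T x = (starRingEnd ℂ lam) • x) ∧
      LinearMap.ker (↑(T - lam • (1 : H →L[ℂ] H)) : H →ₗ[ℂ] H) ≤
        LinearMap.ker (↑(adjoint T - (starRingEnd ℂ lam) • (1 : H →L[ℂ] H)) : H →ₗ[ℂ] H) := by
  have main : ∀ x : H, T x = lam • x → adjoint T x = (starRingEnd ℂ lam) • x := by
    intro x hx
    have hpow : ∀ m : ℕ, (T ^ m) x = lam ^ m • x := by
      intro m
      induction m with
      | zero => simp
      | succ m ih =>
        rw [pow_succ, ContinuousLinearMap.mul_apply, hx, map_smul, ih, smul_smul, pow_succ]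
        ring_nf
    have hl : (0:ℝ) < ‖lam‖ := norm_pos_iff.mpr hlam
    set a := ‖adjoint T x‖ with ha
    set b := ‖x‖ with hb
    set l := ‖lam‖ with hldef
    -- bound ‖T* x‖ ≤ ‖lam‖ * ‖x‖
    have h1 := hT x
    have e1 : ‖adjoint T ((T ^ k) x)‖ = l ^ k * a := by
      rw [hpow k, map_smul, norm_smul, norm_pow]
    have e2 : ‖(T ^ (n+1)) ((T ^ k) x)‖ = l ^ (n + k + 1) * b := by
      rw [hpow k, map_smul, hpow (n+1), norm_smul, norm_smul, norm_pow, norm_pow,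
        ← mul_assoc, ← pow_add]
      ring_nf
      rfl
    have e3 : ‖(T ^ k) x‖ = l ^ k * b := by
      rw [hpow k, norm_smul, norm_pow]
    rw [e1, e2, e3] at h1
    have hb0 : (0:ℝ) ≤ b := norm_nonneg _
    have ha0 : (0:ℝ) ≤ a := norm_nonneg _
    have hlk : (0:ℝ) < l ^ (k * (n+1)) := pow_pos hl _
    have key : a ^ (n+1) ≤ (l * b) ^ (n+1) := by
      have hleft : (l ^ k * a) ^ (n+1) = l ^ (k * (n+1)) * a ^ (n+1) := by
        ring
      have hright : l ^ (n + k + 1) * b * (l ^ k * b) ^ n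
          = l ^ (k * (n+1)) * (l * b) ^ (n+1) := by
        ring
      rw [hleft, hright] at h1
      exact le_of_mul_le_mul_left h1 hlk
    have hab : a ≤ l * b := by
      have := pow_le_pow_iff_left₀ ha0 (by positivity : (0:ℝ) ≤ l * b) (Nat.succ_ne_zero n)
      exact this.mp key
    -- now show the norm of the difference is zero
    have hinner : ⟪adjoint T x, (starRingEnd ℂ lam) • x⟫_ℂ
        = (starRingEnd ℂ lam) * lam * (‖x‖:ℂ)^2 := by
      rw [inner_smul_right, adjoint_inner_left, hx, inner_smul_right, inner_self_eq_norm_sq_to_K]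
      norm_cast
      exact (mul_assoc _ _ _).symm
    have hcl : (starRingEnd ℂ) lam * lam = ((l ^ 2 : ℝ) : ℂ) := by
      rw [mul_comm, Complex.mul_conj']
      norm_cast
    have hre2 : RCLike.re ((starRingEnd ℂ) lam * lam * (‖x‖:ℂ) ^ 2) = l ^ 2 * b ^ 2 := by
      rw [hcl]
      simp [← Complex.ofReal_pow, ← Complex.ofReal_mul]
      exact Or.inl rfl
    have hns2 : ‖(starRingEnd ℂ lam) • x‖ = l * b := by
      rw [norm_smul, RCLike.norm_conj]
    have hnormsq : ‖adjoint T x - (starRingEnd ℂ lam) • x‖ ^ 2 ≤ 0 := by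
      rw [@norm_sub_sq ℂ, hinner, hre2, hns2]
      nlinarith [pow_le_pow_left₀ ha0 hab 2]
    have hz : ‖adjoint T x - (starRingEnd ℂ lam) • x‖ = 0 := by
      nlinarith [norm_nonneg (adjoint T x - (starRingEnd ℂ lam) • x), hnormsq]
    exact sub_eq_zero.mp (norm_eq_zero.mp hz)
  exact ⟨main, by
    intro x hx
    have hx' : T x = lam • x := by
      have := LinearMap.mem_ker.mp hx
      simpa [sub_eq_zero] using this
    have := main x hx'
    simp [LinearMap.mem_ker, sub_eq_zero, this]⟩
end

section
/- Let T be (n,k)-quasi-*-paranormal and λ ≠ 0. If (x_m) is a sequence of unit vectors with (T − λ)x_m → 0, then (T* − conj(λ))x_m → 0. -/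
open ContinuousLinearMap Filter

open scoped InnerProductSpace

/-- If `T` is `(n,k)`-quasi-*-paranormal, `λ ≠ 0`, and `(x_m)` is a sequence of unit vectors with
`(T - λ) x_m → 0`, then `(T* - conj λ) x_m → 0`. -/
theorem stmt_13 {H : Type*} [NormedAddCommGroup H] [InnerProductSpace ℂ H] [CompleteSpace H]
    (T : H →L[ℂ] H) (n k : ℕ)
    (hT : ∀ x : H, ‖adjoint T (T ^ k <| x)‖ ^ (n + 1) ≤
      ‖T ^ (n + 1) <| T ^ k <| x‖ * ‖T ^ k <| x‖ ^ n)
    (lam : ℂ) (hlam : lam ≠ 0)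
    (x : ℕ → H) (hx : ∀ m, ‖x m‖ = 1)
    (hconv : Tendsto (fun m => T (x m) - lam • x m) atTop (nhds 0)) :
    Tendsto (fun m => adjoint T (x m) - (starRingEnd ℂ lam) • x m) atTop (nhds 0) := by
  have hnl : (0:ℝ) < ‖lam‖ := norm_pos_iff.mpr hlam
  -- Step 1: for each l, T^l x_m - lam^l x_m → 0
  have key : ∀ l : ℕ, Tendsto (fun m => (T ^ l) (x m) - lam ^ l • x m) atTop (nhds 0) := by
    intro l
    induction l with
    | zero => simp
    | succ l ih =>
      have h1 : Tendsto (fun m => T ((T ^ l) (x m) - lam ^ l • x m)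
          + lam ^ l • (T (x m) - lam • x m)) atTop (nhds 0) := by
        have h2 := (T.continuous.tendsto 0).comp ih
        have h3 := hconv.const_smul (lam ^ l)
        simpa using h2.add h3
      refine h1.congr fun m => ?_
      simp only [map_sub, map_smul, pow_succ', ContinuousLinearMap.mul_apply, smul_smul]
      module
  -- Step 2: norms converge
  have keyn : ∀ l : ℕ, Tendsto (fun m => ‖(T ^ l) (x m)‖) atTop (nhds (‖lam‖ ^ l)) := by
    intro l
    have h := (key l).norm
    simp only [norm_zero] at h
    have hb : ∀ m, |‖(T ^ l) (x m)‖ - ‖lam‖ ^ l| ≤ ‖(T ^ l) (x m) - lam ^ l • x m‖ := by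
      intro m
      have h2 := abs_norm_sub_norm_le ((T ^ l) (x m)) (lam ^ l • x m)
      simpa [norm_smul, hx m] using h2
    have h2 : Tendsto (fun m => |‖(T ^ l) (x m)‖ - ‖lam‖ ^ l|) atTop (nhds 0) :=
      squeeze_zero (fun m => abs_nonneg _) hb h
    rw [← tendsto_sub_nhds_zero_iff]
    rw [tendsto_zero_iff_norm_tendsto_zero]
    simpa [Real.norm_eq_abs] using h2
  -- R m and its limit
  set R : ℕ → ℝ := fun m => ‖(T ^ (n+1)) ((T ^ k) (x m))‖ * ‖(T ^ k) (x m)‖ ^ n with hR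
  have hRconv : Tendsto R atTop (nhds (‖lam‖ ^ ((k+1)*(n+1)))) := by
    have h1 : ∀ m, (T ^ (n+1)) ((T ^ k) (x m)) = (T ^ (n+1+k)) (x m) := by
      intro m
      rw [← ContinuousLinearMap.mul_apply, ← pow_add]
    have h2 : Tendsto (fun m => ‖(T ^ (n+1+k)) (x m)‖ * ‖(T ^ k) (x m)‖ ^ n) atTop
        (nhds (‖lam‖ ^ (n+1+k) * (‖lam‖ ^ k) ^ n)) := (keyn _).mul ((keyn k).pow n)
    have h3 : ‖lam‖ ^ (n+1+k) * (‖lam‖ ^ k) ^ n = ‖lam‖ ^ ((k+1)*(n+1)) := by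
      rw [← pow_mul, ← pow_add]; ring_nf
    rw [← h3]
    refine h2.congr fun m => ?_
    simp only [hR, h1 m]
  -- rho m : (n+1)-th root of R m
  set ρ : ℕ → ℝ := fun m => (R m) ^ ((n+1:ℝ)⁻¹) with hρ
  have hRnonneg : ∀ m, 0 ≤ R m := fun m => by positivity
  have hρconv : Tendsto ρ atTop (nhds (‖lam‖ ^ (k+1))) := by
    have h := hRconv.rpow_const (p := (n+1:ℝ)⁻¹) (Or.inr (by positivity))
    have h2 : (‖lam‖ ^ ((k+1)*(n+1)) : ℝ) ^ ((n+1:ℝ)⁻¹) = ‖lam‖ ^ (k+1) := by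
      rw [← Real.rpow_natCast ‖lam‖ ((k+1)*(n+1)), ← Real.rpow_natCast ‖lam‖ (k+1),
        ← Real.rpow_mul hnl.le]
      congr 1
      push_cast
      field_simp
    rwa [h2] at h
  have hρle : ∀ m, ‖adjoint T ((T ^ k) (x m))‖ ≤ ρ m := by
    intro m
    set a := ‖adjoint T ((T ^ k) (x m))‖ with ha
    have h1 : a ^ (n+1) ≤ R m := hT (x m)
    have h2 : a = (a ^ (n+1) : ℝ) ^ ((n+1:ℝ)⁻¹) := by
      rw [← Real.rpow_natCast a (n+1), ← Real.rpow_mul (norm_nonneg _)]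
      rw [Nat.cast_add_one]
      rw [mul_inv_cancel₀ (a := ((n:ℝ)+1)) (by positivity), Real.rpow_one]
    rw [h2]
    exact Real.rpow_le_rpow (by positivity) h1 (by positivity)
  -- e m
  set e : ℕ → ℝ := fun m => ‖(T ^ k) (x m) - lam ^ k • x m‖ with he
  have heconv : Tendsto e atTop (nhds 0) := by simpa [he] using (key k).norm
  set C : ℝ := ‖adjoint T‖ with hC
  -- b m ≤ s m
  set b : ℕ → ℝ := fun m => ‖adjoint T (x m)‖ with hb
  set s : ℕ → ℝ := fun m => (ρ m + C * e m) / ‖lam‖ ^ k with hs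
  have hbs : ∀ m, b m ≤ s m := by
    intro m
    rw [hs, le_div_iff₀ (by positivity)]
    have h1 : b m * ‖lam‖ ^ k = ‖adjoint T (lam ^ k • x m)‖ := by
      rw [map_smul, norm_smul, norm_pow]; ring
    have h2 : adjoint T (lam ^ k • x m)
        = adjoint T ((T ^ k) (x m)) - adjoint T ((T ^ k) (x m) - lam ^ k • x m) := by
      rw [map_sub]; abel
    rw [h1, h2]
    calc ‖adjoint T ((T ^ k) (x m)) - adjoint T ((T ^ k) (x m) - lam ^ k • x m)‖
        ≤ ‖adjoint T ((T ^ k) (x m))‖ + ‖adjoint T ((T ^ k) (x m) - lam ^ k • x m)‖ :=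
          norm_sub_le _ _
      _ ≤ ρ m + C * e m := by
          gcongr
          · exact hρle m
          · exact (adjoint T).le_opNorm _
  have hsconv : Tendsto s atTop (nhds ‖lam‖) := by
    have h1 : Tendsto (fun m => (ρ m + C * e m) / ‖lam‖ ^ k) atTop
        (nhds ((‖lam‖ ^ (k+1) + C * 0) / ‖lam‖ ^ k)) :=
      (hρconv.add (heconv.const_mul C)).div_const _
    have h2 : (‖lam‖ ^ (k+1) + C * 0) / ‖lam‖ ^ k = ‖lam‖ := by
      rw [mul_zero, add_zero, pow_succ, mul_comm, mul_div_assoc,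
        div_self (by positivity), mul_one]
    rwa [h2] at h1
  -- r m
  set r : ℕ → ℝ := fun m => RCLike.re (⟪adjoint T (x m), (starRingEnd ℂ lam) • x m⟫_ℂ) with hr
  have hinner : Tendsto (fun m => ⟪x m, T (x m)⟫_ℂ) atTop (nhds lam) := by
    have h0 : Tendsto (fun m => ⟪x m, T (x m) - lam • x m⟫_ℂ) atTop (nhds 0) := by
      rw [tendsto_zero_iff_norm_tendsto_zero]
      refine squeeze_zero (fun m => norm_nonneg _) (fun m => ?_) (by simpa using hconv.norm)
      calc ‖⟪x m, T (x m) - lam • x m⟫_ℂ‖ ≤ ‖x m‖ * ‖T (x m) - lam • x m‖ :=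
            norm_inner_le_norm _ _
        _ = ‖T (x m) - lam • x m‖ := by rw [hx m, one_mul]
    have h1 : ∀ m, ⟪x m, T (x m)⟫_ℂ = ⟪x m, T (x m) - lam • x m⟫_ℂ + lam := by
      intro m
      rw [inner_sub_right, inner_smul_right, inner_self_eq_norm_sq_to_K, hx m]
      push_cast
      ring
    have := h0.add (tendsto_const_nhds (x := lam))
    rw [zero_add] at this
    exact this.congr fun m => (h1 m).symm
  have hrconv : Tendsto r atTop (nhds (‖lam‖ ^ 2)) := by
    have h1 : ∀ m, r m = RCLike.re ((starRingEnd ℂ lam) * ⟪x m, T (x m)⟫_ℂ) := by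
      intro m
      simp only [hr]
      rw [inner_smul_right, adjoint_inner_left]
    have h2 : Tendsto (fun m => (starRingEnd ℂ lam) * ⟪x m, T (x m)⟫_ℂ) atTop
        (nhds ((starRingEnd ℂ lam) * lam)) := hinner.const_mul _
    have h3 := (RCLike.continuous_re.tendsto _).comp h2
    have h4 : RCLike.re ((starRingEnd ℂ lam) * lam) = ‖lam‖ ^ 2 := by
      simp [RCLike.conj_mul, ← Complex.ofReal_pow]
    rw [← h4]
    exact h3.congr fun m => (h1 m).symm
  -- final squeeze
  have hfin : Tendsto (fun m => ‖adjoint T (x m) - (starRingEnd ℂ lam) • x m‖ ^ 2) atTop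
      (nhds 0) := by
    have hnorm2 : ∀ m, ‖adjoint T (x m) - (starRingEnd ℂ lam) • x m‖ ^ 2
        = b m ^ 2 - 2 * r m + ‖lam‖ ^ 2 := by
      intro m
      rw [@norm_sub_sq ℂ]
      congr 1
      rw [norm_smul, hx m]
      simp
    have hub : ∀ m, ‖adjoint T (x m) - (starRingEnd ℂ lam) • x m‖ ^ 2
        ≤ s m ^ 2 - 2 * r m + ‖lam‖ ^ 2 := by
      intro m
      rw [hnorm2 m]
      have : b m ^ 2 ≤ s m ^ 2 := by
        have := hbs m
        have hb0 : 0 ≤ b m := norm_nonneg _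
        nlinarith
      linarith
    have hRHS : Tendsto (fun m => s m ^ 2 - 2 * r m + ‖lam‖ ^ 2) atTop (nhds 0) := by
      have h1 := ((hsconv.pow 2).sub (hrconv.const_mul 2)).add
        (tendsto_const_nhds (x := ‖lam‖ ^ 2))
      have h2 : ‖lam‖ ^ 2 - 2 * ‖lam‖ ^ 2 + ‖lam‖ ^ 2 = 0 := by ring
      rwa [h2] at h1
    exact squeeze_zero (fun m => by positivity) hub hRHS
  rw [tendsto_zero_iff_norm_tendsto_zero]
  have h := (Real.continuous_sqrt.tendsto 0).comp hfin
  simp only [Real.sqrt_zero] at h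
  refine h.congr fun m => ?_
  simp only [Function.comp_apply]
  rw [Real.sqrt_sq (norm_nonneg _)]
end

section
/- If T is (n,k)-quasi-*-paranormal, then the nonzero parts of the point spectrum and the joint point spectrum coincide: σ_jp(T) \ {0} = σ_p(T) \ {0}; similarly σ_ja(T) \ {0} = σ_a(T) \ {0}. -/
open ContinuousLinearMap Filter
open scoped InnerProductSpace

lemma key_lemma {H : Type*} [NormedAddCommGroup H] [InnerProductSpace ℂ H]
    [CompleteSpace H] (T : H →L[ℂ] H) (n k : ℕ)
    (hT : ∀ x : H, ‖adjoint T (T ^ k <| x)‖ ^ (n + 1) ≤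
      ‖T ^ (n + 1) <| T ^ k <| x‖ * ‖T ^ k <| x‖ ^ n)
    (lam : ℂ) (hlam : lam ≠ 0) (x : ℕ → H) (hx : ∀ m, ‖x m‖ = 1)
    (h1 : Tendsto (fun m => T (x m) - lam • x m) atTop (nhds 0)) :
    Tendsto (fun m => adjoint T (x m) - (starRingEnd ℂ lam) • x m) atTop (nhds 0) := by
  set L := ‖lam‖ with hLdef
  have hL : 0 < L := norm_pos_iff.2 hlam
  have hpow : ∀ j : ℕ, Tendsto (fun m => (T ^ j) (x m) - lam ^ j • x m) atTop (nhds 0) := by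
    intro j
    induction j with
    | zero => simpa using tendsto_const_nhds
    | succ j ih =>
      have hA : Tendsto (fun m => T ((T ^ j) (x m) - lam ^ j • x m)) atTop (nhds 0) := by
        have h' := (T.continuous.tendsto 0).comp ih
        simp only [Function.comp_def, map_zero] at h'
        exact h'
      have hB : Tendsto (fun m => lam ^ j • (T (x m) - lam • x m)) atTop (nhds 0) := by
        simpa using h1.const_smul (lam ^ j)
      have h2 := hA.add hB
      rw [add_zero] at h2
      refine h2.congr (fun m => ?_)
      have : (T ^ (j+1)) (x m) = T ((T ^ j) (x m)) := by
        rw [pow_succ']; rfl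
      rw [this, map_sub, map_smul, smul_sub]
      rw [smul_smul, ← pow_succ]
      abel
  have hnorm : ∀ j : ℕ, Tendsto (fun m => ‖(T ^ j) (x m)‖) atTop (nhds (L ^ j)) := by
    intro j
    have h2 : Tendsto (fun m => ‖(T ^ j) (x m)‖ - L ^ j) atTop (nhds 0) := by
      refine squeeze_zero_norm (fun m => ?_) (tendsto_zero_iff_norm_tendsto_zero.1 (hpow j))
      ·
        have hs : ‖lam ^ j • x m‖ = L ^ j := by
          rw [norm_smul, hx m, mul_one, norm_pow]
        calc ‖‖(T ^ j) (x m)‖ - L ^ j‖ = |‖(T ^ j) (x m)‖ - ‖lam ^ j • x m‖| := by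
              rw [hs]; rfl
          _ ≤ ‖(T ^ j) (x m) - lam ^ j • x m‖ := abs_norm_sub_norm_le _ _
    have := h2.add_const (L ^ j)
    rw [zero_add] at this
    simpa using this
  have hb : ∀ δ : ℝ, 0 < δ → ∀ᶠ m in atTop, ‖adjoint T (x m)‖ < L + δ := by
    intro δ hδ
    set η := L ^ k * δ with hη
    have hηpos : 0 < η := by positivity
    have hRHS : Tendsto (fun m => ‖(T ^ (n+1)) ((T ^ k) (x m))‖ * ‖(T ^ k) (x m)‖ ^ n)
        atTop (nhds ((L ^ (k+1)) ^ (n+1))) := by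
      have hlim := (hnorm (n+1+k)).mul ((hnorm k).pow n)
      have heq : L ^ (n+1+k) * (L ^ k) ^ n = (L ^ (k+1)) ^ (n+1) := by
        rw [← pow_mul, ← pow_mul, ← pow_add]; ring_nf
      rw [heq] at hlim
      refine hlim.congr (fun m => ?_)
      have : (T ^ (n+1+k)) (x m) = (T ^ (n+1)) ((T ^ k) (x m)) := by
        rw [pow_add]; rfl
      rw [this]
    have hw : ∀ᶠ m in atTop, ‖adjoint T ((T ^ k) (x m))‖ < L ^ (k+1) + η / 2 := by
      have hlt : (L ^ (k+1)) ^ (n+1) < (L ^ (k+1) + η / 2) ^ (n+1) := by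
        apply pow_lt_pow_left₀ (by linarith) (by positivity) (Nat.succ_ne_zero n)
      have hev := hRHS.eventually_lt_const hlt
      filter_upwards [hev] with m hm
      exact lt_of_pow_lt_pow_left₀ (n+1) (by positivity) (lt_of_le_of_lt (hT (x m)) hm)
    have herr : ∀ᶠ m in atTop, ‖adjoint T ((T ^ k) (x m) - lam ^ k • x m)‖ < η / 2 := by
      have h3 : Tendsto (fun m => adjoint T ((T ^ k) (x m) - lam ^ k • x m)) atTop (nhds 0) := by
        have h' := ((adjoint T).continuous.tendsto 0).comp (hpow k)
        simp only [Function.comp_def, map_zero] at h'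
        exact h'
      exact (tendsto_zero_iff_norm_tendsto_zero.1 h3).eventually_lt_const (by positivity)
    filter_upwards [hw, herr] with m h5 h6
    have hid : lam ^ k • adjoint T (x m)
        = adjoint T ((T ^ k) (x m)) - adjoint T ((T ^ k) (x m) - lam ^ k • x m) := by
      rw [map_sub, map_smul]; abel
    have h7 : L ^ k * ‖adjoint T (x m)‖ ≤ ‖adjoint T ((T ^ k) (x m))‖
        + ‖adjoint T ((T ^ k) (x m) - lam ^ k • x m)‖ := by
      calc L ^ k * ‖adjoint T (x m)‖ = ‖lam ^ k • adjoint T (x m)‖ := by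
            rw [norm_smul, norm_pow]
        _ ≤ _ := by rw [hid]; exact norm_sub_le _ _
    have h8 : L ^ k * ‖adjoint T (x m)‖ < L ^ k * (L + δ) := by
      have : L ^ (k+1) + η = L ^ k * (L + δ) := by rw [hη, pow_succ]; ring
      linarith
    exact lt_of_mul_lt_mul_left h8 (by positivity)
  rw [NormedAddCommGroup.tendsto_nhds_zero]
  intro ε hε
  set δ := min 1 (ε ^ 2 / (4 * L + 1)) with hδdef
  have hδpos : 0 < δ := lt_min one_pos (by positivity)
  have hδ1 : δ ≤ 1 := min_le_left _ _
  have hδ2 : δ ≤ ε ^ 2 / (4 * L + 1) := min_le_right _ _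
  have hδ2' : δ * (4 * L + 1) ≤ ε ^ 2 := by
    rw [← le_div_iff₀ (by positivity)]; exact hδ2
  have hev2 : ∀ᶠ m in atTop, ‖T (x m) - lam • x m‖ < δ :=
    (tendsto_zero_iff_norm_tendsto_zero.1 h1).eventually_lt_const hδpos
  filter_upwards [hb δ hδpos, hev2] with m hbm hem
  set u := adjoint T (x m) with hu
  set v := (starRingEnd ℂ lam) • x m with hv
  have hinner : ⟪u, v⟫_ℂ = (starRingEnd ℂ lam) * ⟪x m, T (x m)⟫_ℂ := by
    rw [hv, inner_smul_right, hu, adjoint_inner_left]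
  have hinner2 : ⟪x m, T (x m)⟫_ℂ = lam + ⟪x m, T (x m) - lam • x m⟫_ℂ := by
    have : T (x m) = lam • x m + (T (x m) - lam • x m) := by abel
    conv_lhs => rw [this]
    rw [inner_add_right, inner_smul_right, inner_self_eq_norm_sq_to_K, hx m]
    push_cast; ring
  have hre1 : ((starRingEnd ℂ lam) * lam).re = L ^ 2 := by
    have h9 := Complex.sq_norm lam
    rw [Complex.normSq_apply] at h9
    simp only [Complex.mul_re, Complex.conj_re, Complex.conj_im, hLdef]
    nlinarith [h9]
  have habs : |((starRingEnd ℂ lam) * ⟪x m, T (x m) - lam • x m⟫_ℂ).re|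
      ≤ L * ‖T (x m) - lam • x m‖ := by
    calc |((starRingEnd ℂ lam) * ⟪x m, T (x m) - lam • x m⟫_ℂ).re|
        ≤ ‖(starRingEnd ℂ lam) * ⟪x m, T (x m) - lam • x m⟫_ℂ‖ := Complex.abs_re_le_norm _
      _ = L * ‖⟪x m, T (x m) - lam • x m⟫_ℂ‖ := by
          rw [norm_mul]; simp [hLdef]
      _ ≤ L * (‖x m‖ * ‖T (x m) - lam • x m‖) := by
          exact mul_le_mul_of_nonneg_left (norm_inner_le_norm _ _) hL.le
      _ = L * ‖T (x m) - lam • x m‖ := by rw [hx m, one_mul]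
  have hre : (⟪u, v⟫_ℂ).re ≥ L ^ 2 - L * ‖T (x m) - lam • x m‖ := by
    rw [hinner, hinner2, mul_add, Complex.add_re, hre1]
    have := abs_le.1 habs
    linarith [this.1]
  have hsq : ‖u - v‖ ^ 2 = ‖u‖ ^ 2 - 2 * (⟪u, v⟫_ℂ).re + ‖v‖ ^ 2 := by
    exact norm_sub_sq (𝕜 := ℂ) u v
  have hvn : ‖v‖ = L := by
    rw [hv, norm_smul, hx m, mul_one]; simp [hLdef]
  have hfin : ‖u - v‖ ^ 2 < ε ^ 2 := by
    rw [hsq, hvn]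
    have hb2 : ‖u‖ ^ 2 < (L + δ) ^ 2 := by
      apply pow_lt_pow_left₀ hbm (norm_nonneg _) (by norm_num)
    nlinarith [hre, hem, norm_nonneg (T (x m) - lam • x m), hL]
  exact lt_of_pow_lt_pow_left₀ 2 hε.le hfin

/-- If `T` is `(n,k)`-quasi-*-paranormal, then the nonzero parts of the point spectrum and of
the joint point spectrum coincide, and the nonzero parts of the approximate point spectrum and
of the joint approximate point spectrum coincide. -/
theorem stmt_15 {H : Type*} [NormedAddCommGroup H] [InnerProductSpace ℂ H] [CompleteSpace H]
    (T : H →L[ℂ] H) (n k : ℕ)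
    (hT : ∀ x : H, ‖adjoint T (T ^ k <| x)‖ ^ (n + 1) ≤
      ‖T ^ (n + 1) <| T ^ k <| x‖ * ‖T ^ k <| x‖ ^ n) :
    ({lam : ℂ | ∃ x : H, x ≠ 0 ∧ T x = lam • x ∧ adjoint T x = (starRingEnd ℂ lam) • x} \ {0}
        = {lam : ℂ | ∃ x : H, x ≠ 0 ∧ T x = lam • x} \ {0})
    ∧ ({lam : ℂ | ∃ x : ℕ → H, (∀ m, ‖x m‖ = 1) ∧
          Tendsto (fun m => T (x m) - lam • x m) atTop (nhds 0) ∧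
          Tendsto (fun m => adjoint T (x m) - (starRingEnd ℂ lam) • x m) atTop (nhds 0)} \ {0}
        = {lam : ℂ | ∃ x : ℕ → H, (∀ m, ‖x m‖ = 1) ∧
            Tendsto (fun m => T (x m) - lam • x m) atTop (nhds 0)} \ {0}) := by
  constructor
  · ext lam
    simp only [Set.mem_diff, Set.mem_setOf_eq, Set.mem_singleton_iff]
    constructor
    · rintro ⟨⟨x, hx0, hTx, _⟩, hlam⟩
      exact ⟨⟨x, hx0, hTx⟩, hlam⟩
    · rintro ⟨⟨x, hx0, hTx⟩, hlam⟩
      refine ⟨?_, hlam⟩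
      set y : H := (‖x‖ : ℂ)⁻¹ • x with hy
      have hxn : ‖x‖ ≠ 0 := norm_ne_zero_iff.2 hx0
      have hyn : ‖y‖ = 1 := by
        rw [hy, norm_smul, norm_inv, Complex.norm_real, Real.norm_eq_abs,
          abs_of_nonneg (norm_nonneg x), inv_mul_cancel₀ hxn]
      have hy0 : y ≠ 0 := by
        intro h; rw [h, norm_zero] at hyn; norm_num at hyn
      have hTy : T y = lam • y := by
        rw [hy, map_smul, hTx, smul_comm]
      have hconst : Tendsto (fun _ : ℕ => T y - lam • y) atTop (nhds 0) := by
        rw [hTy, sub_self]; exact tendsto_const_nhds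
      have hkey := key_lemma T n k hT lam hlam (fun _ => y) (fun _ => hyn) hconst
      have hz : adjoint T y - (starRingEnd ℂ lam) • y = 0 :=
        tendsto_nhds_unique tendsto_const_nhds hkey
      exact ⟨y, hy0, hTy, by rwa [sub_eq_zero] at hz⟩
  · ext lam
    simp only [Set.mem_diff, Set.mem_setOf_eq, Set.mem_singleton_iff]
    constructor
    · rintro ⟨⟨x, hx1, hx2, _⟩, hlam⟩
      exact ⟨⟨x, hx1, hx2⟩, hlam⟩
    · rintro ⟨⟨x, hx1, hx2⟩, hlam⟩
      exact ⟨⟨x, hx1, hx2, key_lemma T n k hT lam hlam x hx1 hx2⟩, hlam⟩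
end

section
/- If T is (n,k)-quasi-*-paranormal and λ ≠ μ are complex numbers, then the eigenspaces ker(T − λ) and ker(T − μ) are orthogonal. -/
open ContinuousLinearMap

lemma aux_adj {H : Type*} [NormedAddCommGroup H] [InnerProductSpace ℂ H] [CompleteSpace H]
    (T : H →L[ℂ] H) (n k : ℕ)
    (hT : ∀ x : H, ‖adjoint T (T ^ k <| x)‖ ^ (n + 1) ≤
      ‖T ^ (n + 1) <| T ^ k <| x‖ * ‖T ^ k <| x‖ ^ n)
    (lam : ℂ) (hlam : lam ≠ 0) (x : H) (hx : T x = lam • x) :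
    adjoint T x = (starRingEnd ℂ lam) • x := by
  have hpow : ∀ m : ℕ, (T ^ m) x = lam ^ m • x := by
    intro m
    induction m with
    | zero => simp
    | succ m ih =>
      rw [pow_succ', pow_succ']
      simp [ContinuousLinearMap.comp_apply, ih, hx, smul_smul, mul_comm]
  have h1 := hT x
  rw [hpow k, map_smul, map_smul, hpow (n+1)] at h1
  rw [norm_smul, norm_smul, norm_smul, norm_smul] at h1
  -- h1 : (‖lam^k‖ * ‖T* x‖)^(n+1) ≤ ‖lam^k‖ * (‖lam^(n+1)‖ * ‖x‖) * (‖lam^k‖ * ‖x‖)^n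
  have hnorm : ‖adjoint T x‖ ≤ ‖lam‖ * ‖x‖ := by
    have hc : (0:ℝ) < ‖lam‖ ^ k := pow_pos (norm_pos_iff.mpr hlam) k
    have key : ‖adjoint T x‖ ^ (n+1) ≤ (‖lam‖ * ‖x‖) ^ (n+1) := by
      have h2 : (‖lam‖^k)^(n+1) * ‖adjoint T x‖ ^ (n+1) ≤
          (‖lam‖^k)^(n+1) * (‖lam‖ * ‖x‖) ^ (n+1) := by
        calc (‖lam‖^k)^(n+1) * ‖adjoint T x‖ ^ (n+1)
            = (‖lam^k‖ * ‖adjoint T x‖)^(n+1) := by rw [mul_pow, norm_pow]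
          _ ≤ ‖lam^k‖ * (‖lam^(n+1)‖ * ‖x‖) * (‖lam^k‖ * ‖x‖)^n := h1
          _ = (‖lam‖^k)^(n+1) * (‖lam‖ * ‖x‖) ^ (n+1) := by
              simp [norm_pow, mul_pow]; ring
      exact le_of_mul_le_mul_left h2 (pow_pos hc (n+1))
    exact pow_le_pow_iff_left₀ (norm_nonneg _)
      (mul_nonneg (norm_nonneg _) (norm_nonneg _)) (Nat.succ_ne_zero n) |>.mp key
  have hinner : (inner ℂ (adjoint T x) x : ℂ) = lam * (‖x‖:ℂ)^2 := by
    rw [adjoint_inner_left, hx, inner_smul_right, inner_self_eq_norm_sq_to_K]; rfl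
  have hsq : ‖adjoint T x - (starRingEnd ℂ lam) • x‖ ^ 2 ≤ 0 := by
    have expand := @norm_sub_sq ℂ H _ _ _ (adjoint T x) ((starRingEnd ℂ lam) • x)
    rw [inner_smul_right] at expand
    rw [expand]
    have hre : (RCLike.re ((starRingEnd ℂ lam) * inner ℂ (adjoint T x) x) : ℝ)
        = ‖lam‖^2 * ‖x‖^2 := by
      rw [hinner]
      have : (starRingEnd ℂ lam) * (lam * (‖x‖:ℂ)^2) = ((‖lam‖^2 * ‖x‖^2 : ℝ) : ℂ) := by
        rw [← mul_assoc, Complex.conj_mul']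
        push_cast; ring
      rw [this]; exact RCLike.ofReal_re _
    rw [hre, norm_smul]
    have h2 : ‖adjoint T x‖^2 ≤ (‖lam‖ * ‖x‖)^2 :=
      pow_le_pow_left₀ (norm_nonneg _) hnorm 2
    have : ‖(starRingEnd ℂ lam)‖ = ‖lam‖ := RCLike.norm_conj lam
    rw [this]
    nlinarith [norm_nonneg x, norm_nonneg lam]
  have : adjoint T x - (starRingEnd ℂ lam) • x = 0 := by
    have := le_antisymm hsq (sq_nonneg _)
    have hn : ‖adjoint T x - (starRingEnd ℂ lam) • x‖ = 0 := by
      nlinarith [norm_nonneg (adjoint T x - (starRingEnd ℂ lam) • x)]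
    exact norm_eq_zero.mp hn
  linear_combination (norm := module) this

/-- If `T` is `(n,k)`-quasi-*-paranormal and `λ ≠ μ`, then `ker (T - λ) ⊥ ker (T - μ)`. -/
theorem stmt_16 {H : Type*} [NormedAddCommGroup H] [InnerProductSpace ℂ H] [CompleteSpace H]
    (T : H →L[ℂ] H) (n k : ℕ)
    (hT : ∀ x : H, ‖adjoint T (T ^ k <| x)‖ ^ (n + 1) ≤
      ‖T ^ (n + 1) <| T ^ k <| x‖ * ‖T ^ k <| x‖ ^ n)
    (lam mu : ℂ) (hne : lam ≠ mu) :
    ∀ x y : H, T x = lam • x → T y = mu • y → (inner ℂ x y : ℂ) = 0 := by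
  intro x y hx hy
  by_cases hl : lam = 0
  · have hm : mu ≠ 0 := fun h => hne (by rw [hl, h])
    have hady := aux_adj T n k hT mu hm y hy
    have h0 : (inner ℂ (T x) y : ℂ) = 0 := by
      rw [hx, hl]; simp
    rw [← adjoint_inner_right, hady, inner_smul_right] at h0
    exact (mul_eq_zero.mp h0).resolve_left (by simpa using hm)
  · have hadx := aux_adj T n k hT lam hl x hx
    have h1 : (inner ℂ (adjoint T x) y : ℂ) = inner ℂ x (T y) := adjoint_inner_left T y x
    rw [hadx, inner_smul_left, hy, inner_smul_right] at h1
    simp only [RingHom.id_apply, starRingEnd_self_apply] at h1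
    have h2 : (lam - mu) * (inner ℂ x y : ℂ) = 0 := by
      rw [sub_mul, h1, sub_self]
    exact (mul_eq_zero.mp h2).resolve_left (sub_ne_zero.mpr hne)
end

section
/- If T is (n,k)-quasi-*-paranormal, then ker(T^{1+k}) = ker(T^{2+k}), and for every nonzero λ ∈ ℂ, ker(T − λ) = ker((T − λ)²). -/
open ContinuousLinearMap

local notation "⟪" x ", " y "⟫" => @inner ℂ _ _ x y

lemma aux_eig_pow {H : Type*} [NormedAddCommGroup H] [InnerProductSpace ℂ H]
    (T : H →L[ℂ] H) {lam : ℂ} {x : H} (hx : T x = lam • x) (m : ℕ) :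
    (T ^ m) x = lam ^ m • x := by
  induction m with
  | zero => simp
  | succ m ih =>
    rw [pow_succ, ContinuousLinearMap.mul_apply, hx, map_smul, ih, smul_smul, pow_succ, mul_comm]

lemma aux_adjoint_eig {H : Type*} [NormedAddCommGroup H] [InnerProductSpace ℂ H]
    [CompleteSpace H] (T : H →L[ℂ] H) (n k : ℕ)
    (hT : ∀ x : H, ‖adjoint T (T ^ k <| x)‖ ^ (n + 1) ≤
      ‖T ^ (n + 1) <| T ^ k <| x‖ * ‖T ^ k <| x‖ ^ n)
    {lam : ℂ} (hlam : lam ≠ 0) {x : H} (hx : T x = lam • x) :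
    adjoint T x = (starRingEnd ℂ lam) • x := by
  have hl : (0:ℝ) < ‖lam‖ := norm_pos_iff.mpr hlam
  have h := hT x
  rw [aux_eig_pow T hx k, map_smul, map_smul, aux_eig_pow T hx (n+1)] at h
  simp only [norm_smul, norm_pow, smul_smul] at h
  have hc : (0:ℝ) < (‖lam‖ ^ k) ^ (n + 1) := by positivity
  have h2 : ‖adjoint T x‖ ^ (n+1) ≤ (‖lam‖ * ‖x‖) ^ (n+1) := by
    rw [← mul_le_mul_iff_right₀ hc]
    calc (‖lam‖ ^ k) ^ (n+1) * ‖adjoint T x‖ ^ (n+1)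
        = (‖lam‖ ^ k * ‖adjoint T x‖) ^ (n+1) := by ring
      _ ≤ ‖lam ^ k * lam ^ (n+1)‖ * ‖x‖ * (‖lam‖ ^ k * ‖x‖) ^ n := h
      _ = (‖lam‖ ^ k) ^ (n+1) * (‖lam‖ * ‖x‖) ^ (n+1) := by
          rw [norm_mul, norm_pow, norm_pow]; ring
  have h3 : ‖adjoint T x‖ ≤ ‖lam‖ * ‖x‖ :=
    (pow_le_pow_iff_left₀ (norm_nonneg _)
      (mul_nonneg (norm_nonneg lam) (norm_nonneg x)) (Nat.succ_ne_zero n)).mp h2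
  have hre : RCLike.re ⟪adjoint T x, (starRingEnd ℂ lam) • x⟫ = ‖lam‖^2 * ‖x‖^2 := by
    rw [inner_smul_right, adjoint_inner_left, hx, inner_smul_right,
      inner_self_eq_norm_sq_to_K, ← mul_assoc, Complex.conj_mul']
    simp [← Complex.ofReal_pow]
  have hns : ‖adjoint T x - (starRingEnd ℂ lam) • x‖ ^ 2 ≤ 0 := by
    rw [@norm_sub_sq ℂ, hre, norm_smul]
    simp only [RCLike.norm_conj]
    nlinarith [norm_nonneg (adjoint T x), norm_nonneg x]
  have h0 : adjoint T x - (starRingEnd ℂ lam) • x = 0 := by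
    have : ‖adjoint T x - (starRingEnd ℂ lam) • x‖ = 0 := by
      nlinarith [norm_nonneg (adjoint T x - (starRingEnd ℂ lam) • x)]
    simpa using this
  exact sub_eq_zero.mp h0

/-- If `T` is `(n,k)`-quasi-*-paranormal, then `ker T^{1+k} = ker T^{2+k}`, and for every
nonzero `λ ∈ ℂ`, `ker (T - λ) = ker ((T - λ)^2)`. -/
theorem stmt_17 {H : Type*} [NormedAddCommGroup H] [InnerProductSpace ℂ H] [CompleteSpace H]
    (T : H →L[ℂ] H) (n k : ℕ)
    (hT : ∀ x : H, ‖adjoint T (T ^ k <| x)‖ ^ (n + 1) ≤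
      ‖T ^ (n + 1) <| T ^ k <| x‖ * ‖T ^ k <| x‖ ^ n) :
    LinearMap.ker ((T ^ (1 + k) : H →L[ℂ] H) : H →ₗ[ℂ] H) = LinearMap.ker ((T ^ (2 + k) : H →L[ℂ] H) : H →ₗ[ℂ] H)
      ∧ ∀ lam : ℂ, lam ≠ 0 →
        LinearMap.ker ((T - lam • (1 : H →L[ℂ] H) : H →L[ℂ] H) : H →ₗ[ℂ] H)
          = LinearMap.ker (((T - lam • (1 : H →L[ℂ] H)) ^ 2 : H →L[ℂ] H) : H →ₗ[ℂ] H) := by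
  constructor
  · ext x
    simp only [LinearMap.mem_ker, ContinuousLinearMap.coe_coe]
    constructor
    · intro hx
      have h21 : (2 + k) = 1 + (1 + k) := by ring
      rw [h21, pow_add, ContinuousLinearMap.mul_apply, pow_one]
      rw [show ((T ^ (1 + k)) x : H) = 0 from hx, map_zero]
    · intro hx
      set y := (T ^ (1 + k)) x with hy
      have e1 : (T ^ k) (T x) = y := by
        rw [← ContinuousLinearMap.mul_apply, ← pow_succ, add_comm k 1]
      have e2 : (T ^ (n + 1)) ((T ^ k) (T x)) = 0 := by
        rw [e1, hy, ← ContinuousLinearMap.mul_apply, ← pow_add,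
          show n + 1 + (1 + k) = n + (2 + k) from by ring, pow_add, ContinuousLinearMap.mul_apply,
          show ((T ^ (2 + k)) x : H) = 0 from hx, map_zero]
      have h := hT (T x)
      rw [e2, e1] at h
      rw [norm_zero, zero_mul] at h
      have hadj : adjoint T y = 0 := by
        have h0 : ‖adjoint T y‖ ^ (n + 1) = 0 :=
          le_antisymm h (pow_nonneg (norm_nonneg _) _)
        simpa using (pow_eq_zero_iff (Nat.succ_ne_zero n)).mp h0
      have : ⟪y, y⟫ = 0 := by
        have hy2 : y = T ((T ^ k) x) := by
          rw [hy, add_comm 1 k, pow_succ', ContinuousLinearMap.mul_apply]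
        calc ⟪y, y⟫ = ⟪y, T ((T ^ k) x)⟫ := by rw [← hy2]
          _ = ⟪adjoint T y, (T ^ k) x⟫ := (adjoint_inner_left T _ _).symm
          _ = 0 := by rw [hadj, inner_zero_left]
      exact inner_self_eq_zero.mp this
  · intro lam hlam
    ext x
    simp only [LinearMap.mem_ker, ContinuousLinearMap.coe_coe]
    constructor
    · intro hx
      rw [sq, ContinuousLinearMap.mul_apply, show ((T - lam • (1 : H →L[ℂ] H)) x : H) = 0 from hx, map_zero]
    · intro hx
      set S := T - lam • (1 : H →L[ℂ] H) with hS
      set y := S x with hy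
      have hSy : S y = 0 := by
        rw [hy, ← ContinuousLinearMap.mul_apply, ← sq]; exact hx
      have hTy : T y = lam • y := by
        have : T y - lam • y = 0 := by
          simpa [hS, sub_apply, smul_apply, one_apply] using hSy
        exact sub_eq_zero.mp this
      have hadj : adjoint T y = (starRingEnd ℂ lam) • y :=
        aux_adjoint_eig T n k hT hlam hTy
      have : ⟪y, y⟫ = 0 := by
        calc ⟪y, y⟫ = ⟪y, T x - lam • x⟫ := by
              rw [hy, hS]; simp [sub_apply, smul_apply, one_apply]
          _ = ⟪y, T x⟫ - lam * ⟪y, x⟫ := by rw [inner_sub_right, inner_smul_right]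
          _ = ⟪adjoint T y, x⟫ - lam * ⟪y, x⟫ := by rw [adjoint_inner_left]
          _ = 0 := by rw [hadj, inner_smul_left]; simp [mul_comm]
      exact inner_self_eq_zero.mp this
end

section
/- If T is (n,0)-quasi-*-paranormal (i.e., n-*-paranormal) or (n,1)-quasi-*-paranormal, then T is normaloid: ‖T‖ equals the spectral radius r(T). -/
open ContinuousLinearMap Filter Topology
open scoped InnerProductSpace ENNReal

/-- If `T` is `(n,0)`-quasi-*-paranormal (i.e. `n`-*-paranormal) or `(n,1)`-quasi-*-paranormal,
then `T` is normaloid: its norm equals its spectral radius. -/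
theorem stmt_19 {H : Type*} [NormedAddCommGroup H] [InnerProductSpace ℂ H] [CompleteSpace H]
    (T : H →L[ℂ] H) (n : ℕ)
    (hT : (∀ x : H, ‖adjoint T (T ^ 0 <| x)‖ ^ (n + 1) ≤
        ‖T ^ (n + 1) <| T ^ 0 <| x‖ * ‖T ^ 0 <| x‖ ^ n)
      ∨ (∀ x : H, ‖adjoint T (T ^ 1 <| x)‖ ^ (n + 1) ≤
        ‖T ^ (n + 1) <| T ^ 1 <| x‖ * ‖T ^ 1 <| x‖ ^ n)) :
    spectralRadius ℂ T = ENNReal.ofReal ‖T‖ := by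
  by_cases h0 : T = 0
  · subst h0; simp
  have hM : 0 < ‖T‖ := norm_pos_iff.mpr h0
  -- Step 1: both cases give the same inequality
  have hadj : ∀ x : H, ‖adjoint T (T x)‖ ^ (n + 1) ≤ ‖(T ^ (n + 1)) (T x)‖ * ‖T x‖ ^ n := by
    rcases hT with h | h
    · intro x; simpa using h (T x)
    · intro x; simpa using h x
  -- Step 2: T is (n+2)-paranormal
  have P : ∀ x : H, ‖T x‖ ^ (n + 2) ≤ ‖(T ^ (n + 2)) x‖ * ‖x‖ ^ (n + 1) := by
    intro x
    rcases eq_or_lt_of_le (norm_nonneg (T x)) with hz | hz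
    · rw [← hz, zero_pow (by omega : n+2 ≠ 0)]; positivity
    -- Cauchy–Schwarz step
    have cs : ‖T x‖ ^ 2 ≤ ‖adjoint T (T x)‖ * ‖x‖ := by
      have h1 : (⟪adjoint T (T x), x⟫_ℂ) = ⟪T x, T x⟫_ℂ := adjoint_inner_left T x (T x)
      have h2 : ‖(⟪adjoint T (T x), x⟫_ℂ)‖ ≤ ‖adjoint T (T x)‖ * ‖x‖ :=
        norm_inner_le_norm _ _
      calc ‖T x‖ ^ 2 = RCLike.re (⟪T x, T x⟫_ℂ) := by
            rw [inner_self_eq_norm_sq]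
        _ ≤ ‖(⟪T x, T x⟫_ℂ)‖ := RCLike.re_le_norm _
        _ = ‖(⟪adjoint T (T x), x⟫_ℂ)‖ := by rw [h1]
        _ ≤ ‖adjoint T (T x)‖ * ‖x‖ := h2
    have e2 : (T ^ (n + 1)) (T x) = (T ^ (n + 2)) x := by
      conv_rhs => rw [show n + 2 = (n+1) + 1 from rfl, pow_succ, mul_apply_eq_comp]
    have chain : (‖T x‖ ^ 2) ^ (n+1) ≤
        (‖(T ^ (n + 2)) x‖ * ‖x‖ ^ (n+1)) * ‖T x‖ ^ n := by
      calc (‖T x‖ ^ 2) ^ (n+1) ≤ (‖adjoint T (T x)‖ * ‖x‖) ^ (n+1) :=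
            pow_le_pow_left₀ (by positivity) cs _
        _ = ‖adjoint T (T x)‖ ^ (n+1) * ‖x‖ ^ (n+1) := mul_pow _ _ _
        _ ≤ (‖(T ^ (n + 1)) (T x)‖ * ‖T x‖ ^ n) * ‖x‖ ^ (n+1) := by
            gcongr; exact hadj x
        _ = (‖(T ^ (n + 2)) x‖ * ‖x‖ ^ (n+1)) * ‖T x‖ ^ n := by rw [e2]; ring
    refine le_of_mul_le_mul_right ?_ (show (0:ℝ) < ‖T x‖ ^ n by positivity)
    calc ‖T x‖ ^ (n+2) * ‖T x‖ ^ n = (‖T x‖ ^ 2) ^ (n+1) := by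
          rw [← pow_add, ← pow_mul]; ring_nf
      _ ≤ (‖(T ^ (n + 2)) x‖ * ‖x‖ ^ (n+1)) * ‖T x‖ ^ n := chain
  -- helper: pointwise power bound
  have happ : ∀ (k : ℕ) (y : H), ‖(T ^ k) y‖ ≤ ‖T‖ ^ k * ‖y‖ := by
    intro k
    induction k with
    | zero => intro y; simp
    | succ k ih =>
      intro y
      rw [pow_succ, mul_apply_eq_comp]
      calc ‖(T ^ k) (T y)‖ ≤ ‖T‖ ^ k * ‖T y‖ := ih (T y)
        _ ≤ ‖T‖ ^ k * (‖T‖ * ‖y‖) := by gcongr; exact le_opNorm T y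
        _ = ‖T‖ ^ (k+1) * ‖y‖ := by ring
  -- Step 3: norm equality along the subsequence 1 + j*(n+1)
  have key : ∀ j : ℕ, ‖T‖ ^ (1 + j*(n+1)) ≤ ‖T ^ (1 + j*(n+1))‖ := by
    intro j
    have bound : ∀ ε : ℝ, 0 < ε → ε < 1 →
        ‖T‖ ^ (1 + j*(n+1)) * (1-ε) ^ ((n+2)^j) ≤ ‖T ^ (1 + j*(n+1))‖ := by
      intro ε hε hε1
      obtain ⟨x, hx1, hx2⟩ := T.exists_lt_apply_of_lt_opNorm
        (show ‖T‖ * (1-ε) < ‖T‖ by nlinarith)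
      have hε0 : (0:ℝ) ≤ 1 - ε := by linarith
      have main : ∀ i : ℕ,
          ‖T‖ ^ (1 + i*(n+1)) * (1-ε) ^ ((n+2)^i) ≤ ‖(T ^ (1 + i*(n+1))) x‖ := by
        intro i
        induction i with
        | zero => simpa using hx2.le
        | succ i ih =>
          have hP := P ((T ^ (i*(n+1))) x)
          have e1 : T ((T ^ (i*(n+1))) x) = (T ^ (1 + i*(n+1))) x := by
            rw [pow_add, pow_one, mul_apply_eq_comp]
          have e2 : (T ^ (n+2)) ((T ^ (i*(n+1))) x) = (T ^ (1 + (i+1)*(n+1))) x := by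
            rw [← mul_apply_eq_comp, ← pow_add]
            congr 1
            ring
          rw [e1, e2] at hP
          have hb : ‖(T ^ (i*(n+1))) x‖ ≤ ‖T‖ ^ (i*(n+1)) := by
            calc ‖(T ^ (i*(n+1))) x‖ ≤ ‖T‖ ^ (i*(n+1)) * ‖x‖ := happ _ _
              _ ≤ ‖T‖ ^ (i*(n+1)) * 1 := mul_le_mul_of_nonneg_left hx1.le (by positivity)
              _ = ‖T‖ ^ (i*(n+1)) := mul_one _
          refine le_of_mul_le_mul_right ?_
            (show (0:ℝ) < ‖T‖ ^ (i*(n+1)*(n+1)) by positivity)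
          have ee1 : (1 + i*(n+1))*(n+2) = (1 + (i+1)*(n+1)) + i*(n+1)*(n+1) := by ring
          calc ‖T‖ ^ (1 + (i+1)*(n+1)) * (1-ε) ^ ((n+2)^(i+1)) * ‖T‖ ^ (i*(n+1)*(n+1))
              = (‖T‖ ^ (1 + i*(n+1)) * (1-ε) ^ ((n+2)^i)) ^ (n+2) := by
                rw [mul_pow, ← pow_mul, ← pow_mul, ee1, pow_add, pow_succ, pow_mul]
                ring
            _ ≤ ‖(T ^ (1 + i*(n+1))) x‖ ^ (n+2) := pow_le_pow_left₀ (by positivity) ih _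
            _ ≤ ‖(T ^ (1 + (i+1)*(n+1))) x‖ * ‖(T ^ (i*(n+1))) x‖ ^ (n+1) := hP
            _ ≤ ‖(T ^ (1 + (i+1)*(n+1))) x‖ * (‖T‖ ^ (i*(n+1))) ^ (n+1) := by gcongr
            _ = ‖(T ^ (1 + (i+1)*(n+1))) x‖ * ‖T‖ ^ (i*(n+1)*(n+1)) := by
                rw [← pow_mul]
      calc ‖T‖ ^ (1 + j*(n+1)) * (1-ε) ^ ((n+2)^j) ≤ ‖(T ^ (1 + j*(n+1))) x‖ := main j
        _ ≤ ‖T ^ (1 + j*(n+1))‖ * ‖x‖ := le_opNorm _ _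
        _ ≤ ‖T ^ (1 + j*(n+1))‖ * 1 := mul_le_mul_of_nonneg_left hx1.le (norm_nonneg _)
        _ = ‖T ^ (1 + j*(n+1))‖ := mul_one _
    have tend : Tendsto (fun ε : ℝ => ‖T‖ ^ (1 + j*(n+1)) * (1-ε) ^ ((n+2)^j))
        (𝓝[>] (0:ℝ)) (𝓝 (‖T‖ ^ (1 + j*(n+1)))) := by
      have hc : Continuous (fun ε : ℝ => ‖T‖ ^ (1 + j*(n+1)) * (1-ε) ^ ((n+2)^j)) := by
        continuity
      have h2 := (hc.tendsto 0).mono_left (nhdsWithin_le_nhds (s := Set.Ioi (0:ℝ)))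
      simpa using h2
    refine le_of_tendsto tend ?_
    filter_upwards [Ioo_mem_nhdsGT_of_mem (Set.left_mem_Ico.mpr one_pos)] with ε hε
    exact bound ε hε.1 hε.2
  have keq : ∀ j : ℕ, (‖T ^ (1 + j*(n+1))‖₊ : ℝ≥0∞) = (‖T‖₊ : ℝ≥0∞) ^ (1 + j*(n+1)) := by
    intro j
    have hle : ‖T ^ (1 + j*(n+1))‖ ≤ ‖T‖ ^ (1 + j*(n+1)) :=
      norm_pow_le' T (by omega)
    have heq : ‖T ^ (1 + j*(n+1))‖ = ‖T‖ ^ (1 + j*(n+1)) := le_antisymm hle (key j)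
    have : ‖T ^ (1 + j*(n+1))‖₊ = ‖T‖₊ ^ (1 + j*(n+1)) := by
      ext
      simpa using heq
    rw [this, ENNReal.coe_pow]
  -- Step 4: Gelfand's formula along the subsequence
  have gel := spectrum.pow_nnnorm_pow_one_div_tendsto_nhds_spectralRadius T
  have sub : Tendsto (fun j : ℕ => 1 + j*(n+1)) atTop atTop := by
    apply tendsto_atTop_mono (fun j => ?_) tendsto_id
    calc (id j : ℕ) = j := rfl
      _ ≤ j * (n+1) := Nat.le_mul_of_pos_right j (Nat.succ_pos n)
      _ ≤ 1 + j * (n+1) := Nat.le_add_left _ _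
  have comp := gel.comp sub
  have funeq : ((fun m : ℕ => (‖T ^ m‖₊ : ℝ≥0∞) ^ (1 / m : ℝ)) ∘ (fun j : ℕ => 1 + j*(n+1)))
      = fun _ : ℕ => (‖T‖₊ : ℝ≥0∞) := by
    funext j
    have hN : ((1 + j*(n+1) : ℕ) : ℝ) ≠ 0 := by positivity
    simp only [Function.comp_apply]
    rw [keq j, ← ENNReal.rpow_natCast (‖T‖₊ : ℝ≥0∞) (1 + j*(n+1)), ← ENNReal.rpow_mul,
      mul_one_div_cancel hN, ENNReal.rpow_one]
  rw [funeq] at comp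
  have := tendsto_nhds_unique comp tendsto_const_nhds
  rw [this, ofReal_norm, enorm_eq_nnnorm]
end
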